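/- arXiv:1703.10716 — 5 statements merged into one kernel-verified Lean document; each statement's English description precedes it below -/
import Mathlib

section
/- Let {X_n} be i.i.d. random variables with common distribution F, and let ρ₁ = sup{r ≥ 0 : lim_{x→∞} x^r P(X > x) = 0}. If 0 < ρ₁ ≤ ∞, then limsup_{n→∞} (log max_{1≤k≤n} X_k)/(log n) ≤ 1/ρ₁ almost surely, where log x = ln(e ∨ x) and 1/∞ = 0. -/
open MeasureTheory ProbabilityTheory Filter
open scoped ENNReal

/-- `log x = ln (e ∨ x)` as in the paper. -/
noncomputable def Log (x : ℝ) : ℝ := Real.log (max (Real.exp 1) x)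

/-- `pmax X n ω = max_{1 ≤ k ≤ n} X_k(ω)` (indexed `0,…,n-1`), junk value at `n = 0`. -/
noncomputable def pmax {Ω : Type*} (X : ℕ → Ω → ℝ) (n : ℕ) (ω : Ω) : ℝ :=
  if h : n = 0 then X 0 ω
  else (Finset.range n).sup' (Finset.nonempty_range_iff.mpr h) fun k => X k ω

private lemma tail_bound (r : ℝ) (hr : 0 ≤ r) (p : ℝ → ℝ) (hp1 : ∀ x, p x ≤ 1)
    (h : Tendsto (fun x : ℝ => x ^ r * p x) atTop (nhds 0)) :
    ∃ C : ℝ, 1 ≤ C ∧ ∀ x : ℝ, 1 ≤ x → p x ≤ C * x ^ (-r) := by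
  have hev : ∀ᶠ x : ℝ in atTop, x ^ r * p x ≤ 1 :=
    h.eventually (eventually_le_nhds (by norm_num : (0:ℝ) < 1))
  obtain ⟨x₀, hx₀⟩ := eventually_atTop.1 hev
  set M := max x₀ 1 with hM
  refine ⟨max 1 (M ^ r), le_max_left _ _, fun x hx => ?_⟩
  have hxpos : (0:ℝ) < x := lt_of_lt_of_le one_pos hx
  have hxr : (0:ℝ) < x ^ r := Real.rpow_pos_of_pos hxpos r
  have hxnr : (0:ℝ) < x ^ (-r) := Real.rpow_pos_of_pos hxpos (-r)
  have hinv : x ^ (-r) = (x ^ r)⁻¹ := Real.rpow_neg hxpos.le r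
  rcases le_or_gt M x with hMx | hxM
  · have h1 : x ^ r * p x ≤ 1 := hx₀ x (le_trans (le_max_left _ _) hMx)
    have h2 : p x ≤ x ^ (-r) := by
      rw [hinv, ← one_div, le_div_iff₀ hxr]; nlinarith [h1]
    calc p x ≤ x ^ (-r) := h2
      _ ≤ max 1 (M ^ r) * x ^ (-r) := by nlinarith [le_max_left (1:ℝ) (M ^ r)]
  · have hMr : x ^ r ≤ M ^ r := Real.rpow_le_rpow hxpos.le hxM.le hr
    have h1 : 1 ≤ M ^ r * x ^ (-r) := by
      rw [hinv, ← div_eq_mul_inv, le_div_iff₀ hxr]; nlinarith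
    calc p x ≤ 1 := hp1 x
      _ ≤ M ^ r * x ^ (-r) := h1
      _ ≤ max 1 (M ^ r) * x ^ (-r) := by nlinarith [le_max_right (1:ℝ) (M ^ r)]

private lemma pow_calc (q r C : ℝ) (j : ℕ) :
    (2:ℝ)^(j+1:ℕ) * (C * ((2:ℝ)^((j:ℝ)*q))^(-r)) = (2*C) * ((2:ℝ)^((1:ℝ)-q*r))^j := by
  have h2 : (0:ℝ) ≤ 2 := by norm_num
  have h2' : (0:ℝ) < 2 := by norm_num
  rw [← Real.rpow_natCast (2:ℝ) (j+1), ← Real.rpow_natCast ((2:ℝ)^((1:ℝ)-q*r)) j,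
    ← Real.rpow_mul h2, ← Real.rpow_mul h2]
  push_cast
  rw [show ((j:ℝ)+1) = 1 + (j:ℝ) from by ring, Real.rpow_add h2', Real.rpow_one,
    show ((1:ℝ)-q*r)*(j:ℝ) = (j:ℝ) + (j:ℝ)*q*(-r) from by ring, Real.rpow_add h2']
  ring

private lemma key_ae {Ω : Type*} [MeasurableSpace Ω] (μ : Measure Ω) [IsProbabilityMeasure μ]
    (X : ℕ → Ω → ℝ) (hident : ∀ n, IdentDistrib (X n) (X 0) μ μ)
    (q r : ℝ) (hq : 0 < q) (hqr : 1 < q * r) (hr : 0 ≤ r)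
    (htend : Tendsto (fun x : ℝ => x ^ r * (μ {ω | X 0 ω > x}).toReal) atTop (nhds 0)) :
    ∀ᵐ ω ∂μ, ∀ᶠ n : ℕ in atTop, Log (pmax X n ω) / Log n ≤ q := by
  set p : ℝ → ℝ := fun x => (μ {ω | X 0 ω > x}).toReal with hp
  have hp1 : ∀ x, p x ≤ 1 := by
    intro x
    have h := prob_le_one (μ := μ) (s := {ω | X 0 ω > x})
    have := ENNReal.toReal_mono ENNReal.one_ne_top h
    simpa using this
  obtain ⟨C, hC1, hC⟩ := tail_bound r hr p hp1 htend
  set c : ℕ → ℝ := fun j => (2:ℝ) ^ ((j:ℝ) * q) with hc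
  have hc1 : ∀ j, (1:ℝ) ≤ c j := by
    intro j
    have : (2:ℝ) ^ (0:ℝ) ≤ (2:ℝ) ^ ((j:ℝ) * q) :=
      Real.rpow_le_rpow_of_exponent_le (by norm_num) (by positivity)
    simpa using this
  set E : ℕ → Set Ω := fun j => ⋃ k ∈ Finset.range (2^(j+1)), {ω | X k ω > c j} with hE
  set ρ : ℝ := (2:ℝ) ^ ((1:ℝ) - q * r) with hρ
  have hρ0 : 0 ≤ ρ := Real.rpow_nonneg (by norm_num) _
  have hρ1 : ρ < 1 := Real.rpow_lt_one_of_one_lt_of_neg (by norm_num) (by linarith)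
  have hbound : ∀ j, μ (E j) ≤ ENNReal.ofReal ((2*C) * ρ^j) := by
    intro j
    have hmeq : ∀ k, μ {ω | X k ω > c j} = μ {ω | X 0 ω > c j} := by
      intro k
      have : {ω | X k ω > c j} = X k ⁻¹' Set.Ioi (c j) := rfl
      rw [this, show {ω | X 0 ω > c j} = X 0 ⁻¹' Set.Ioi (c j) from rfl]
      exact (hident k).measure_mem_eq measurableSet_Ioi
    calc μ (E j) ≤ ∑ k ∈ Finset.range (2^(j+1)), μ {ω | X k ω > c j} :=
          measure_biUnion_finset_le _ _
      _ = (2^(j+1) : ℕ) * μ {ω | X 0 ω > c j} := by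
          rw [Finset.sum_congr rfl (fun k _ => hmeq k), Finset.sum_const, Finset.card_range,
            nsmul_eq_mul]
      _ = (2^(j+1) : ℕ) * ENNReal.ofReal (p (c j)) := by
          rw [ENNReal.ofReal_toReal (measure_ne_top μ _)]
      _ ≤ (2^(j+1) : ℕ) * ENNReal.ofReal (C * (c j) ^ (-r)) := by
          exact mul_le_mul_right (ENNReal.ofReal_le_ofReal (hC _ (hc1 j))) _
      _ = ENNReal.ofReal ((2^(j+1) : ℕ) * (C * (c j) ^ (-r))) := by
          rw [← ENNReal.ofReal_natCast (2^(j+1)), ← ENNReal.ofReal_mul (by positivity)]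
      _ = ENNReal.ofReal ((2*C) * ρ^j) := by
          congr 1
          push_cast
          exact pow_calc q r C j
  have hsum : Summable (fun j : ℕ => (2*C) * ρ^j) :=
    (summable_geometric_of_lt_one hρ0 hρ1).mul_left _
  have hnn : ∀ j : ℕ, 0 ≤ (2*C) * ρ^j := fun j => by positivity
  have htsum : (∑' j, μ (E j)) ≠ ∞ := by
    apply ne_of_lt
    calc (∑' j, μ (E j)) ≤ ∑' j, ENNReal.ofReal ((2*C) * ρ^j) := ENNReal.tsum_le_tsum hbound
      _ = ENNReal.ofReal (∑' j, (2*C) * ρ^j) := (ENNReal.ofReal_tsum_of_nonneg hnn hsum).symm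
      _ < ∞ := ENNReal.ofReal_lt_top
  have hBC := ae_eventually_notMem (μ := μ) htsum
  filter_upwards [hBC] with ω hω
  obtain ⟨J, hJ⟩ := eventually_atTop.1 hω
  have hlogT : Tendsto (fun n : ℕ => Real.log n) atTop atTop :=
    Real.tendsto_log_atTop.comp tendsto_natCast_atTop_atTop
  have h3 := hlogT.eventually_ge_atTop (1/q)
  have he3 : Real.exp 1 < 3 := by
    have := Real.exp_one_lt_d9
    linarith
  filter_upwards [eventually_ge_atTop (2^J), eventually_ge_atTop 3, h3] with n hn1 hn2 hn3
  have hn0 : n ≠ 0 := by omega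
  have hn0' : (0:ℝ) < n := by positivity
  have hn3' : (3:ℝ) ≤ n := by exact_mod_cast hn2
  set j := Nat.log 2 n with hj
  have hj1 : 2^j ≤ n := Nat.pow_log_le_self 2 hn0
  have hj2 : n < 2^(j+1) := Nat.lt_pow_succ_log_self (by norm_num) n
  have hjJ : J ≤ j := by
    have := Nat.log_mono_right (b := 2) hn1
    rwa [Nat.log_pow (by norm_num)] at this
  have hnE : ω ∉ E j := hJ j hjJ
  have hXle : ∀ k, k < 2^(j+1) → X k ω ≤ c j := by
    intro k hk
    by_contra hgt
    push_neg at hgt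
    exact hnE (Set.mem_biUnion (Finset.mem_range.2 hk) hgt)
  have hcn : c j ≤ (n:ℝ) ^ q := by
    have heq : c j = (((2:ℝ))^(j:ℕ)) ^ q := by
      rw [hc, ← Real.rpow_natCast (2:ℝ) j, ← Real.rpow_mul (by norm_num)]
    rw [heq]
    apply Real.rpow_le_rpow (by positivity) _ hq.le
    exact_mod_cast hj1
  have hpm : pmax X n ω ≤ (n:ℝ) ^ q := by
    rw [pmax, dif_neg hn0]
    apply Finset.sup'_le
    intro k hk
    have hk' : k < 2^(j+1) := lt_of_lt_of_le (Finset.mem_range.1 hk) (le_of_lt hj2)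
    exact le_trans (hXle k hk') hcn
  have hLn : Log (n:ℝ) = Real.log n := by
    rw [Log, max_eq_right (by linarith)]
  have hlogn1 : 1 ≤ q * Real.log n := by
    have : 1/q ≤ Real.log n := hn3
    rw [div_le_iff₀ hq] at this
    linarith [mul_comm (Real.log (n:ℝ)) q]
  have hnq : Real.exp 1 ≤ (n:ℝ) ^ q := by
    rw [Real.rpow_def_of_pos hn0']
    apply Real.exp_le_exp.2
    linarith [mul_comm (Real.log (n:ℝ)) q]
  have hLnq : Log ((n:ℝ) ^ q) = q * Real.log n := by
    rw [Log, max_eq_right hnq, Real.log_rpow hn0']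
  have hlogpos : 0 < Real.log n := Real.log_pos (by linarith)
  have hmono : Log (pmax X n ω) ≤ Log ((n:ℝ) ^ q) := by
    apply Real.log_le_log (lt_of_lt_of_le (Real.exp_pos 1) (le_max_left _ _))
    exact max_le_max le_rfl hpm
  rw [hLn, div_le_iff₀ hlogpos]
  calc Log (pmax X n ω) ≤ Log ((n:ℝ) ^ q) := hmono
    _ = q * Real.log n := hLnq

theorem stmt4 {Ω : Type*} [MeasurableSpace Ω] (μ : Measure Ω) [IsProbabilityMeasure μ]
    (X : ℕ → Ω → ℝ) (hmeas : ∀ n, Measurable (X n))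
    (hindep : iIndepFun X μ)
    (hident : ∀ n, IdentDistrib (X n) (X 0) μ μ)
    (ρ₁ : ℝ≥0∞)
    (hρ₁ : ρ₁ = sSup (ENNReal.ofReal '' {r : ℝ | 0 ≤ r ∧
        Tendsto (fun x : ℝ => x ^ r * (μ {ω | X 0 ω > x}).toReal) atTop (nhds 0)}))
    (hpos : 0 < ρ₁) :
    ∀ᵐ ω ∂μ,
      Filter.limsup (fun n : ℕ => ENNReal.ofReal (Log (pmax X n ω) / Log n)) atTop ≤ ρ₁⁻¹ := by
  have key : ∀ q : ℚ, ρ₁⁻¹ < ENNReal.ofReal q →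
      (∀ᵐ ω ∂μ, ∀ᶠ n : ℕ in atTop, Log (pmax X n ω) / Log n ≤ (q:ℝ)) := by
    intro q hq
    have hq0 : (0:ℝ) < (q:ℝ) := by
      have h0 : (0:ℝ≥0∞) < ENNReal.ofReal q := lt_of_le_of_lt zero_le hq
      exact ENNReal.ofReal_pos.1 h0
    have h1 : (ENNReal.ofReal q)⁻¹ < ρ₁ := by
      exact ENNReal.inv_lt_iff_inv_lt.1 hq
    rw [hρ₁] at h1
    obtain ⟨s, hs, hlt⟩ := lt_sSup_iff.1 h1
    obtain ⟨r, ⟨hr0, htend⟩, rfl⟩ := hs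
    have hlt' : ENNReal.ofReal ((q:ℝ)⁻¹) < ENNReal.ofReal r := by
      rwa [ENNReal.ofReal_inv_of_pos hq0]
    have hrq : (q:ℝ)⁻¹ < r :=
      (ENNReal.ofReal_lt_ofReal_iff_of_nonneg (inv_nonneg.2 hq0.le)).1 hlt'
    have hqr : 1 < (q:ℝ) * r := by
      rw [inv_eq_one_div, div_lt_iff₀ hq0] at hrq
      linarith [mul_comm r (q:ℝ)]
    exact key_ae μ X hident q r hq0 hqr hr0 htend
  have hall : ∀ᵐ ω ∂μ, ∀ q : ℚ, ρ₁⁻¹ < ENNReal.ofReal q →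
      ∀ᶠ n : ℕ in atTop, Log (pmax X n ω) / Log n ≤ (q:ℝ) := by
    rw [ae_all_iff]
    intro q
    by_cases hq : ρ₁⁻¹ < ENNReal.ofReal q
    · filter_upwards [key q hq] with ω h _
      exact h
    · filter_upwards with ω h
      exact absurd h hq
  filter_upwards [hall] with ω hω
  by_contra hcon
  push_neg at hcon
  obtain ⟨qq, hq0, h1, h2⟩ := ENNReal.lt_iff_exists_rat_btwn.1 hcon
  have h1' : ρ₁⁻¹ < ENNReal.ofReal qq := by
    simpa [ENNReal.ofReal] using h1
  have hev := hω qq h1'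
  have hls : Filter.limsup (fun n : ℕ => ENNReal.ofReal (Log (pmax X n ω) / Log n)) atTop
      ≤ ENNReal.ofReal qq := by
    refine limsup_le_of_le (by isBoundedDefault) ?_
    filter_upwards [hev] with n hn
    exact ENNReal.ofReal_le_ofReal hn
  have h2' : ENNReal.ofReal qq <
      Filter.limsup (fun n : ℕ => ENNReal.ofReal (Log (pmax X n ω) / Log n)) atTop := by
    simpa [ENNReal.ofReal] using h2
  exact absurd hls (not_le.2 h2')
end

section
/- Let {X_n} be i.i.d. random variables and ρ₁ = sup{r ≥ 0 : lim_{x→∞} x^r P(X > x) = 0}. Then limsup_{n→∞} (log max_{1≤k≤n} X_k)/(log n) = 1/ρ₁ almost surely, with the conventions 1/0 = ∞ and 1/∞ = 0. -/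
open MeasureTheory ProbabilityTheory Filter
open scoped ENNReal

lemma Log_mono : Monotone Log := fun _ _ h =>
  Real.log_le_log (lt_of_lt_of_le (Real.exp_pos 1) (le_max_left _ _))
    (max_le_max le_rfl h)

lemma one_le_Log (x : ℝ) : 1 ≤ Log x := by
  have : Real.log (Real.exp 1) ≤ Log x :=
    Real.log_le_log (Real.exp_pos 1) (le_max_left _ _)
  rwa [Real.log_exp] at this

lemma Log_pos (x : ℝ) : 0 < Log x := lt_of_lt_of_le one_pos (one_le_Log x)

lemma Log_of_exp_le {x : ℝ} (h : Real.exp 1 ≤ x) : Log x = Real.log x := by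
  rw [Log, max_eq_right h]

lemma pmax_eq {Ω : Type*} (X : ℕ → Ω → ℝ) {n : ℕ} (hn : n ≠ 0) (ω : Ω) :
    pmax X n ω = (Finset.range n).sup' (Finset.nonempty_range_iff.mpr hn) fun k => X k ω := by
  rw [pmax, dif_neg hn]

lemma le_pmax {Ω : Type*} (X : ℕ → Ω → ℝ) {k n : ℕ} (h : k < n) (ω : Ω) :
    X k ω ≤ pmax X n ω := by
  rw [pmax_eq X (by omega : n ≠ 0) ω]
  exact Finset.le_sup' (fun k => X k ω) (Finset.mem_range.2 h)

lemma pmax_le {Ω : Type*} (X : ℕ → Ω → ℝ) {n : ℕ} (hn : n ≠ 0) (ω : Ω) {c : ℝ}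
    (h : ∀ k < n, X k ω ≤ c) : pmax X n ω ≤ c := by
  rw [pmax_eq X hn ω]
  exact Finset.sup'_le _ _ fun k hk => h k (Finset.mem_range.1 hk)

lemma detU {Ω : Type*} (X : ℕ → Ω → ℝ) (ω : Ω) {a a' : ℝ} (ha : 0 < a) (haa' : a < a')
    (h : ∀ᶠ n : ℕ in atTop, X n ω ≤ (n : ℝ) ^ a) :
    Filter.limsup (fun n : ℕ => ENNReal.ofReal (Log (pmax X n ω) / Log n)) atTop
      ≤ ENNReal.ofReal a' := by
  obtain ⟨N₀, hN₀⟩ := eventually_atTop.1 h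
  set N := max N₀ 1 with hNdef
  set C := pmax X N ω with hC
  have ha' : 0 < a' := lt_trans ha haa'
  have hlogn : Tendsto (fun n : ℕ => Real.log n) atTop atTop :=
    Real.tendsto_log_atTop.comp tendsto_natCast_atTop_atTop
  have hna : Tendsto (fun n : ℕ => (n : ℝ) ^ a) atTop atTop :=
    (tendsto_rpow_atTop ha).comp tendsto_natCast_atTop_atTop
  have h1 : ∀ᶠ n : ℕ in atTop, Real.exp 1 ≤ (n : ℝ) ^ a := hna.eventually_ge_atTop _
  have h2 : ∀ᶠ n : ℕ in atTop, Log C / a' ≤ Real.log n := hlogn.eventually_ge_atTop _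
  have h3 : ∀ᶠ n : ℕ in atTop, Real.exp 1 ≤ (n : ℝ) :=
    tendsto_natCast_atTop_atTop.eventually_ge_atTop _
  refine Filter.limsup_le_of_le (by isBoundedDefault) ?_
  filter_upwards [h1, h2, h3, eventually_ge_atTop N] with n ha1 ha2 ha3 ha4
  have hn0 : n ≠ 0 := by
    have : 1 ≤ N := le_max_right _ _
    omega
  have hnpos : (0 : ℝ) < n := Nat.cast_pos.2 (Nat.pos_of_ne_zero hn0)
  have hlog1 : 1 ≤ Real.log n := by
    have := Real.log_le_log (Real.exp_pos 1) ha3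
    rwa [Real.log_exp] at this
  apply ENNReal.ofReal_le_ofReal
  have hLn : Log (n : ℝ) = Real.log n := Log_of_exp_le ha3
  rw [hLn, div_le_iff₀ (lt_of_lt_of_le one_pos hlog1)]
  have hpm : pmax X n ω ≤ max C ((n : ℝ) ^ a) := by
    refine pmax_le X hn0 ω ?_
    intro k hk
    by_cases hkN : k < N
    · exact le_trans (le_pmax X hkN ω) (le_max_left _ _)
    · have hk0 : N₀ ≤ k := le_trans (le_max_left _ _) (not_lt.1 hkN)
      refine le_trans (hN₀ k hk0) (le_trans ?_ (le_max_right _ _))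
      exact Real.rpow_le_rpow (Nat.cast_nonneg k) (Nat.cast_le.2 hk.le) ha.le
  calc Log (pmax X n ω) ≤ Log (max C ((n : ℝ) ^ a)) := Log_mono hpm
    _ = max (Log C) (Log ((n : ℝ) ^ a)) := Log_mono.map_max
    _ ≤ a' * Real.log n := by
        refine max_le ?_ ?_
        · rw [div_le_iff₀ ha'] at ha2; linarith [ha2]
        · rw [Log_of_exp_le ha1, Real.log_rpow hnpos]
          nlinarith

lemma log_succ_le (n : ℕ) (hn : (1:ℝ) ≤ n) : Real.log ((n:ℝ) + 1) ≤ 1 + Real.log n := by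
  have he : (2:ℝ) ≤ Real.exp 1 := by
    have := Real.add_one_le_exp (1:ℝ); linarith
  have hn0 : (0:ℝ) < n := lt_of_lt_of_le one_pos hn
  have h1 : (n:ℝ) + 1 ≤ Real.exp 1 * n := by nlinarith
  calc Real.log ((n:ℝ) + 1) ≤ Real.log (Real.exp 1 * n) :=
        Real.log_le_log (by linarith) h1
    _ = 1 + Real.log n := by
        rw [Real.log_mul (Real.exp_ne_zero 1) (ne_of_gt hn0), Real.log_exp]

lemma detL {Ω : Type*} (X : ℕ → Ω → ℝ) (ω : Ω) {b a' : ℝ} (hb : 0 < b) (hba' : b < a')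
    (h : ∃ᶠ n : ℕ in Filter.atTop, (n : ℝ) ^ a' < X n ω) :
    ENNReal.ofReal b ≤
      Filter.limsup (fun n : ℕ => ENNReal.ofReal (Log (pmax X n ω) / Log n)) atTop := by
  have ha' : 0 < a' := lt_trans hb hba'
  refine Filter.le_limsup_of_frequently_le ?_ (by isBoundedDefault)
  rw [frequently_atTop]
  intro M
  have hlogn : Tendsto (fun n : ℕ => Real.log n) atTop atTop :=
    Real.tendsto_log_atTop.comp tendsto_natCast_atTop_atTop
  have hna : Tendsto (fun n : ℕ => (n : ℝ) ^ a') atTop atTop :=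
    (tendsto_rpow_atTop ha').comp tendsto_natCast_atTop_atTop
  have h1 : ∀ᶠ n : ℕ in atTop, Real.exp 1 ≤ (n : ℝ) ^ a' := hna.eventually_ge_atTop _
  have h2 : ∀ᶠ n : ℕ in atTop, Real.exp 1 ≤ ((n : ℝ) + 1) := by
    filter_upwards [tendsto_natCast_atTop_atTop.eventually_ge_atTop (Real.exp 1)] with n hn
    linarith
  have h3 : ∀ᶠ n : ℕ in atTop, b / (a' - b) ≤ Real.log n := hlogn.eventually_ge_atTop _
  have h4 : ∀ᶠ n : ℕ in atTop, (1 : ℝ) ≤ (n : ℝ) :=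
    tendsto_natCast_atTop_atTop.eventually_ge_atTop _
  obtain ⟨n, hX, ⟨⟨⟨hn1, hn2⟩, hn3⟩, hn4⟩, hnM⟩ := (h.and_eventually
    ((((h1.and h2).and h3).and h4).and (eventually_ge_atTop M))).exists
  refine ⟨n + 1, le_trans hnM (Nat.le_succ n), ?_⟩
  apply ENNReal.ofReal_le_ofReal
  have hnpos : (0:ℝ) < n := lt_of_lt_of_le one_pos hn4
  have hcast : ((n + 1 : ℕ) : ℝ) = (n : ℝ) + 1 := by push_cast; ring
  have hLsucc : Log ((n + 1 : ℕ) : ℝ) = Real.log ((n:ℝ) + 1) := by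
    rw [hcast, Log_of_exp_le hn2]
  rw [le_div_iff₀ (Log_pos _), hLsucc]
  have hpm : (n:ℝ) ^ a' ≤ pmax X (n+1) ω := le_trans hX.le (le_pmax X (Nat.lt_succ_self n) ω)
  have hLpm : a' * Real.log n ≤ Log (pmax X (n+1) ω) := by
    have := Log_mono hpm
    rwa [Log_of_exp_le hn1, Real.log_rpow hnpos] at this
  have hlog0 : 0 ≤ Real.log n := by
    rw [Real.log_nonneg_iff hnpos]; exact hn4
  have hkey : b * Real.log ((n:ℝ) + 1) ≤ a' * Real.log n := by
    have h5 := log_succ_le n hn4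
    rw [div_le_iff₀ (by linarith : 0 < a' - b)] at hn3
    nlinarith
  exact le_trans hkey hLpm

lemma probU {Ω : Type*} [MeasurableSpace Ω] (μ : Measure Ω) [IsProbabilityMeasure μ]
    (X : ℕ → Ω → ℝ) (hmeas : ∀ n, Measurable (X n))
    (hident : ∀ n, IdentDistrib (X n) (X 0) μ μ)
    {r a a' : ℝ} (ha : 0 < a) (haa' : a < a') (har : 1 < a * r)
    (h0 : Tendsto (fun x : ℝ => x ^ r * (μ {ω | X 0 ω > x}).toReal) atTop (nhds 0)) :
    ∀ᵐ ω ∂μ, Filter.limsup (fun n : ℕ => ENNReal.ofReal (Log (pmax X n ω) / Log n)) atTop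
      ≤ ENNReal.ofReal a' := by
  have hr : 0 < r := by nlinarith
  obtain ⟨x₀, hx₀⟩ := eventually_atTop.1 (h0.eventually_lt_const one_pos)
  set x₁ := max x₀ 1 with hx₁def
  have hx₁ : (1:ℝ) ≤ x₁ := le_max_right _ _
  -- tail bound
  have htail : ∀ x : ℝ, x₁ ≤ x → (μ {ω | X 0 ω > x}).toReal ≤ x ^ (-r) := by
    intro x hx
    have hxpos : (0:ℝ) < x := lt_of_lt_of_le one_pos (le_trans hx₁ hx)
    have hxr : (0:ℝ) < x ^ r := Real.rpow_pos_of_pos hxpos r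
    have h1 : x ^ r * (μ {ω | X 0 ω > x}).toReal ≤ 1 :=
      (hx₀ x (le_trans (le_max_left _ _) hx)).le
    rw [Real.rpow_neg hxpos.le, ← one_div]
    rw [le_div_iff₀ hxr, mul_comm]
    exact h1
  obtain ⟨N, hN⟩ := exists_nat_ge (max (x₁ ^ (1/a)) 1)
  have hN1 : (1:ℝ) ≤ (N:ℝ) := le_trans (le_max_right _ _) hN
  set A : ℕ → Set Ω := fun n => X n ⁻¹' Set.Ioi ((n:ℝ) ^ a) with hA
  have hmeasA : ∀ n, MeasurableSet (A n) := fun n => (hmeas n) measurableSet_Ioi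
  have hmuA : ∀ n : ℕ, μ (A n) = μ {ω | X 0 ω > (n:ℝ) ^ a} := by
    intro n
    have := (hident n).measure_mem_eq (measurableSet_Ioi (a := (n:ℝ) ^ a))
    simpa [hA, Set.preimage, Set.mem_Ioi] using this
  -- bound for n ≥ N
  have hbound : ∀ n : ℕ, N ≤ n → μ (A n) ≤ ENNReal.ofReal ((n:ℝ) ^ (-(a*r))) := by
    intro n hn
    have hncast : (N:ℝ) ≤ (n:ℝ) := Nat.cast_le.2 hn
    have hnpos : (0:ℝ) < n := lt_of_lt_of_le one_pos (le_trans hN1 hncast)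
    have hna : x₁ ≤ (n:ℝ) ^ a := by
      have h1 : x₁ ^ (1/a) ≤ (n:ℝ) := le_trans (le_trans (le_max_left _ _) hN) hncast
      have h2 : (x₁ ^ (1/a)) ^ a ≤ (n:ℝ) ^ a :=
        Real.rpow_le_rpow (Real.rpow_nonneg (by linarith) _) h1 ha.le
      rwa [← Real.rpow_mul (by linarith : (0:ℝ) ≤ x₁), one_div,
        inv_mul_cancel₀ (ne_of_gt ha), Real.rpow_one] at h2
    have h3 : (μ {ω | X 0 ω > (n:ℝ) ^ a}).toReal ≤ ((n:ℝ) ^ a) ^ (-r) := htail _ hna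
    have h4 : ((n:ℝ) ^ a) ^ (-r) = (n:ℝ) ^ (-(a*r)) := by
      rw [← Real.rpow_mul hnpos.le]; ring_nf
    rw [hmuA n, ← ENNReal.ofReal_toReal (measure_ne_top μ _)]
    exact ENNReal.ofReal_le_ofReal (h4 ▸ h3)
  -- summability
  have hsum : (∑' n, μ (A n)) ≠ ∞ := by
    set g : ℕ → ℝ := fun n => if n < N then 1 else (n:ℝ) ^ (-(a*r)) with hgdef
    have hgnonneg : ∀ n, 0 ≤ g n := by
      intro n
      by_cases h : n < N <;> simp [hgdef, h, Real.rpow_nonneg (Nat.cast_nonneg n)]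
    have hgsum : Summable g := by
      refine (summable_nat_add_iff N).1 ?_
      have h5 : Summable (fun n : ℕ => (n:ℝ) ^ (-(a*r))) :=
        Real.summable_nat_rpow.2 (by linarith)
      have h6 := (summable_nat_add_iff N).2 h5
      refine h6.congr fun i => ?_
      have : ¬ (i + N < N) := by omega
      simp [hgdef, this]
    have h7 : ∑' n, μ (A n) ≤ ∑' n, ENNReal.ofReal (g n) := by
      refine ENNReal.tsum_le_tsum fun n => ?_
      by_cases h : n < N
      · simp only [hgdef, if_pos h, ENNReal.ofReal_one]
        exact prob_le_one
      · rw [hgdef]; simp only [if_neg h]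
        exact hbound n (not_lt.1 h)
    refine ne_top_of_le_ne_top ?_ h7
    rw [← ENNReal.ofReal_tsum_of_nonneg hgnonneg hgsum]
    exact ENNReal.ofReal_ne_top
  have hlim : μ (limsup A atTop) = 0 := measure_limsup_atTop_eq_zero hsum
  have hae : ∀ᵐ ω ∂μ, ω ∉ limsup A atTop := measure_eq_zero_iff_ae_notMem.mp hlim
  filter_upwards [hae] with ω hω
  refine detU X ω ha haa' ?_
  rw [mem_limsup_iff_frequently_mem, not_frequently] at hω
  filter_upwards [hω] with n hn
  simpa [hA, Set.mem_Ioi, not_lt] using hn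

lemma probL {Ω : Type*} [MeasurableSpace Ω] (μ : Measure Ω) [IsProbabilityMeasure μ]
    (X : ℕ → Ω → ℝ) (hmeas : ∀ n, Measurable (X n))
    (hindep : iIndepFun X μ)
    (hident : ∀ n, IdentDistrib (X n) (X 0) μ μ)
    {r a' b : ℝ} (hr : 0 < r) (hb : 0 < b) (hba' : b < a') (ha'r : a' * r < 1)
    (hnt : ¬ Tendsto (fun x : ℝ => x ^ r * (μ {ω | X 0 ω > x}).toReal) atTop (nhds 0)) :
    ∀ᵐ ω ∂μ, ENNReal.ofReal b ≤
      Filter.limsup (fun n : ℕ => ENNReal.ofReal (Log (pmax X n ω) / Log n)) atTop := by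
  have ha' : 0 < a' := lt_trans hb hba'
  set T : ℝ → ℝ := fun x => (μ {ω | X 0 ω > x}).toReal with hT
  have hTnonneg : ∀ x, 0 ≤ T x := fun _ => ENNReal.toReal_nonneg
  have hTanti : Antitone T := by
    intro x y hxy
    exact ENNReal.toReal_mono (measure_ne_top μ _)
      (measure_mono (fun ω hω => lt_of_le_of_lt hxy hω))
  -- frequently bound
  have hfreq : ∃ ε > 0, ∃ᶠ x : ℝ in atTop, ε ≤ x ^ r * T x := by
    by_contra hcon
    push_neg at hcon
    apply hnt
    rw [NormedAddCommGroup.tendsto_nhds_zero]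
    intro ε hε
    have h8 := hcon ε hε
    filter_upwards [h8, eventually_ge_atTop (0:ℝ)] with x h9 h10
    rw [Real.norm_eq_abs, abs_of_nonneg (mul_nonneg (Real.rpow_nonneg h10 r) (hTnonneg x))]
    exact h9
  obtain ⟨ε, hε, hfr⟩ := hfreq
  set B : ℕ → Set Ω := fun n => X n ⁻¹' Set.Ioi ((n:ℝ) ^ a') with hB
  have hmeasB : ∀ n, MeasurableSet (B n) := fun n => (hmeas n) measurableSet_Ioi
  have hindepB : iIndepSet B μ := by
    rw [iIndepSet_iff_meas_biInter hmeasB]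
    intro s
    exact hindep.measure_inter_preimage_eq_mul s (fun i _ => measurableSet_Ioi)
  have hmuB : ∀ n : ℕ, μ (B n) = ENNReal.ofReal (T ((n:ℝ) ^ a')) := by
    intro n
    have h1 := (hident n).measure_mem_eq (measurableSet_Ioi (a := (n:ℝ) ^ a'))
    have h2 : μ (B n) = μ {ω | X 0 ω > (n:ℝ) ^ a'} := by
      simpa [hB, Set.preimage, Set.mem_Ioi] using h1
    rw [h2, hT]
    exact (ENNReal.ofReal_toReal (measure_ne_top μ _)).symm
  -- partial sums unbounded
  have hPS : ∀ C : ℝ, ∃ m : ℕ, C ≤ ∑ n ∈ Finset.range m, T ((n:ℝ) ^ a') := by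
    have hs : 0 < 1/a' - r := by
      have : r < 1/a' := by
        rw [lt_div_iff₀ ha']; nlinarith
      linarith
    have htend : Tendsto (fun x : ℝ => ε * x ^ (1/a' - r) + (-ε)) atTop atTop :=
      tendsto_atTop_add_const_right _ (-ε)
        ((tendsto_rpow_atTop hs).const_mul_atTop hε)
    intro C
    have hev : ∀ᶠ x : ℝ in atTop, C ≤ ε * x ^ (1/a' - r) + (-ε) := htend.eventually_ge_atTop C
    obtain ⟨x, hx1, hx2, hx3⟩ := (hfr.and_eventually (hev.and (eventually_ge_atTop 1))).exists
    have hxpos : (0:ℝ) < x := lt_of_lt_of_le one_pos hx3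
    have hxr : (0:ℝ) < x ^ r := Real.rpow_pos_of_pos hxpos r
    have hTx : ε / x ^ r ≤ T x := by
      rw [div_le_iff₀ hxr]; nlinarith
    set m := ⌊x ^ (1/a')⌋₊ with hm
    refine ⟨m, ?_⟩
    have hlb : ∀ n ∈ Finset.range m, ε / x ^ r ≤ T ((n:ℝ) ^ a') := by
      intro n hn
      have h1 : (n:ℝ) < (m:ℝ) := Nat.cast_lt.2 (Finset.mem_range.1 hn)
      have h2 : (m:ℝ) ≤ x ^ (1/a') := Nat.floor_le (Real.rpow_nonneg hxpos.le _)
      have h3 : (n:ℝ) ^ a' ≤ x := by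
        have h4 : ((n:ℝ)) ^ a' ≤ (x ^ (1/a')) ^ a' :=
          Real.rpow_le_rpow (Nat.cast_nonneg n) (le_trans h1.le h2) ha'.le
        rwa [← Real.rpow_mul hxpos.le, one_div, inv_mul_cancel₀ (ne_of_gt ha'),
          Real.rpow_one] at h4
      exact le_trans hTx (hTanti h3)
    have hcard : (m:ℝ) * (ε / x ^ r) ≤ ∑ n ∈ Finset.range m, T ((n:ℝ) ^ a') := by
      have h5 := Finset.card_nsmul_le_sum (Finset.range m) _ _ hlb
      simpa [Finset.card_range, nsmul_eq_mul] using h5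
    have hmflr : x ^ (1/a') - 1 ≤ (m:ℝ) := (Nat.sub_one_lt_floor _).le
    have hdp : (0:ℝ) ≤ ε / x ^ r := by positivity
    have hkey : ε * x ^ (1/a' - r) + (-ε) ≤ (x ^ (1/a') - 1) * (ε / x ^ r) := by
      have hxs : x ^ (1/a' - r) = x ^ (1/a') * (x ^ r)⁻¹ := by
        rw [← Real.rpow_neg hxpos.le, ← Real.rpow_add hxpos]; ring_nf
      have hinv1 : (x ^ r)⁻¹ ≤ 1 := by
        rw [inv_le_one_iff₀]; right; exact Real.one_le_rpow hx3 hr.le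
      have hexp : (x ^ (1/a') - 1) * (ε / x ^ r)
          = ε * (x ^ (1/a') * (x ^ r)⁻¹) - ε * (x ^ r)⁻¹ := by
        field_simp
      have hle : ε * (x ^ r)⁻¹ ≤ ε := by nlinarith [hε.le]
      rw [hxs, hexp]
      linarith
    calc C ≤ ε * x ^ (1/a' - r) + (-ε) := hx2
      _ ≤ (x ^ (1/a') - 1) * (ε / x ^ r) := hkey
      _ ≤ (m:ℝ) * (ε / x ^ r) := mul_le_mul_of_nonneg_right hmflr hdp
      _ ≤ _ := hcard
  -- divergence
  have hdiv : (∑' n, μ (B n)) = ∞ := by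
    by_contra hfin
    obtain ⟨m, hm⟩ := hPS ((∑' n, μ (B n)).toReal + 1)
    have h1 : ∑ n ∈ Finset.range m, μ (B n) ≤ ∑' n, μ (B n) := ENNReal.sum_le_tsum _
    have h2 : ∑ n ∈ Finset.range m, μ (B n)
        = ENNReal.ofReal (∑ n ∈ Finset.range m, T ((n:ℝ) ^ a')) := by
      rw [ENNReal.ofReal_sum_of_nonneg (fun i _ => hTnonneg _)]
      exact Finset.sum_congr rfl fun n _ => hmuB n
    have h3 : ENNReal.ofReal ((∑' n, μ (B n)).toReal + 1) ≤ ∑' n, μ (B n) :=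
      le_trans (le_trans (ENNReal.ofReal_le_ofReal hm) h2.symm.le) h1
    have h4 : ∑' n, μ (B n) < ENNReal.ofReal ((∑' n, μ (B n)).toReal + 1) := by
      conv_lhs => rw [← ENNReal.ofReal_toReal hfin]
      exact (ENNReal.ofReal_lt_ofReal_iff (by positivity)).2 (lt_add_one _)
    exact absurd h3 (not_le.2 h4)
  have hone : μ (limsup B atTop) = 1 := measure_limsup_eq_one hmeasB hindepB hdiv
  have hms : MeasurableSet (limsup B atTop) := MeasurableSet.measurableSet_limsup hmeasB
  have h0 : μ (limsup B atTop)ᶜ = 0 := (prob_compl_eq_zero_iff hms).2 hone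
  have hae : ∀ᵐ ω ∂μ, ω ∈ limsup B atTop := by
    filter_upwards [measure_eq_zero_iff_ae_notMem.mp h0] with ω hω
    simpa using hω
  filter_upwards [hae] with ω hω
  refine detL X ω hb hba' ?_
  rw [mem_limsup_iff_frequently_mem] at hω
  exact hω.mono fun n hn => by simpa [hB, Set.mem_Ioi] using hn

theorem stmt5 {Ω : Type*} [MeasurableSpace Ω] (μ : Measure Ω) [IsProbabilityMeasure μ]
    (X : ℕ → Ω → ℝ) (hmeas : ∀ n, Measurable (X n))
    (hindep : iIndepFun X μ)
    (hident : ∀ n, IdentDistrib (X n) (X 0) μ μ)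
    (ρ₁ : ℝ≥0∞)
    (hρ₁ : ρ₁ = sSup (ENNReal.ofReal '' {r : ℝ | 0 ≤ r ∧
        Tendsto (fun x : ℝ => x ^ r * (μ {ω | X 0 ω > x}).toReal) atTop (nhds 0)})) :
    ∀ᵐ ω ∂μ,
      Filter.limsup (fun n : ℕ => ENNReal.ofReal (Log (pmax X n ω) / Log n)) atTop = ρ₁⁻¹ := by
  set S : Set ℝ := {r : ℝ | 0 ≤ r ∧
      Tendsto (fun x : ℝ => x ^ r * (μ {ω | X 0 ω > x}).toReal) atTop (nhds 0)} with hSdef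
  have hU : ∀ q : ℚ, ∀ᵐ ω ∂μ, ρ₁⁻¹ < ENNReal.ofReal (q:ℝ) →
      Filter.limsup (fun n : ℕ => ENNReal.ofReal (Log (pmax X n ω) / Log n)) atTop
        ≤ ENNReal.ofReal (q:ℝ) := by
    intro q
    by_cases hq : ρ₁⁻¹ < ENNReal.ofReal (q:ℝ)
    · have hq0 : (0:ℝ) < q := by
        by_contra h
        push_neg at h
        rw [ENNReal.ofReal_eq_zero.2 h] at hq
        exact absurd hq (not_lt.2 zero_le)
      have hinv : ENNReal.ofReal ((q:ℝ)⁻¹) < ρ₁ := by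
        rw [ENNReal.ofReal_inv_of_pos hq0, ENNReal.inv_lt_iff_inv_lt]
        exact hq
      rw [hρ₁] at hinv
      obtain ⟨y, ⟨r, hrS, rfl⟩, hry⟩ := lt_sSup_iff.mp hinv
      have hrq : (q:ℝ)⁻¹ < r :=
        (ENNReal.ofReal_lt_ofReal_iff_of_nonneg (inv_nonneg.2 hq0.le)).1 hry
      have hrpos : 0 < r := lt_of_le_of_lt (inv_nonneg.2 hq0.le) hrq
      have h2 : 1 < (q:ℝ) * r := by
        have := mul_lt_mul_of_pos_left hrq hq0
        rwa [mul_inv_cancel₀ (ne_of_gt hq0)] at this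
      have h1 : r⁻¹ < (q:ℝ) := by
        nlinarith [mul_inv_cancel₀ (ne_of_gt hrpos)]
      set a : ℝ := (r⁻¹ + q)/2 with ha_def
      have hrinv : 0 < r⁻¹ := inv_pos.2 hrpos
      have ha : 0 < a := by rw [ha_def]; linarith
      have haq : a < (q:ℝ) := by rw [ha_def]; linarith
      have har : 1 < a * r := by
        have h3 : r⁻¹ < a := by rw [ha_def]; linarith
        have := mul_lt_mul_of_pos_right h3 hrpos
        rwa [inv_mul_cancel₀ (ne_of_gt hrpos)] at this
      exact (probU μ X hmeas hident ha haq har hrS.2).mono fun ω h _ => h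
    · exact ae_of_all _ fun ω h => absurd h hq
  have hL : ∀ q : ℚ, ∀ᵐ ω ∂μ, ENNReal.ofReal (q:ℝ) < ρ₁⁻¹ →
      ENNReal.ofReal (q:ℝ) ≤
        Filter.limsup (fun n : ℕ => ENNReal.ofReal (Log (pmax X n ω) / Log n)) atTop := by
    intro q
    by_cases hq : ENNReal.ofReal (q:ℝ) < ρ₁⁻¹
    · by_cases hq0 : (0:ℝ) < q
      · have hρ₁lt : ρ₁ < ENNReal.ofReal ((q:ℝ)⁻¹) := by
          rw [ENNReal.ofReal_inv_of_pos hq0]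
          have := ENNReal.inv_lt_inv.mpr hq
          rwa [inv_inv] at this
        have hne : ρ₁ ≠ ⊤ := ne_top_of_lt hρ₁lt
        have hs' : ρ₁.toReal < (q:ℝ)⁻¹ := (ENNReal.lt_ofReal_iff_toReal_lt hne).1 hρ₁lt
        obtain ⟨u, hu1, hu2⟩ := exists_rat_btwn hs'
        have hu0 : (0:ℝ) < u := lt_of_le_of_lt ENNReal.toReal_nonneg hu1
        have hnotS : ¬ Tendsto (fun x : ℝ => x ^ (u:ℝ) * (μ {ω | X 0 ω > x}).toReal)
            atTop (nhds 0) := by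
          intro hcon
          have hmem : ENNReal.ofReal (u:ℝ) ∈ ENNReal.ofReal '' S :=
            Set.mem_image_of_mem _ ⟨hu0.le, hcon⟩
          have h5 : ENNReal.ofReal (u:ℝ) ≤ ρ₁ := hρ₁ ▸ le_sSup hmem
          have h6 : (u:ℝ) ≤ ρ₁.toReal := (ENNReal.ofReal_le_iff_le_toReal hne).1 h5
          linarith
        have hq_inv : (q:ℝ) < (u:ℝ)⁻¹ := by
          have := mul_lt_mul_of_pos_left hu2 hu0
          nlinarith [mul_inv_cancel₀ (ne_of_gt hq0), mul_inv_cancel₀ (ne_of_gt hu0)]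
        set a' : ℝ := ((q:ℝ) + (u:ℝ)⁻¹)/2 with ha'def
        have huinv : 0 < (u:ℝ)⁻¹ := inv_pos.2 hu0
        have hba' : (q:ℝ) < a' := by rw [ha'def]; linarith
        have ha'r : a' * (u:ℝ) < 1 := by
          have h7 : a' < (u:ℝ)⁻¹ := by rw [ha'def]; linarith
          have := mul_lt_mul_of_pos_right h7 hu0
          rwa [inv_mul_cancel₀ (ne_of_gt hu0)] at this
        exact (probL μ X hmeas hindep hident hu0 hq0 hba' ha'r hnotS).mono fun ω h _ => h
      · refine ae_of_all _ fun ω _ => ?_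
        rw [ENNReal.ofReal_eq_zero.2 (not_lt.1 hq0)]
        exact zero_le
    · exact ae_of_all _ fun ω h => absurd h hq
  filter_upwards [ae_all_iff.2 hU, ae_all_iff.2 hL] with ω hu hl
  set L := Filter.limsup (fun n : ℕ => ENNReal.ofReal (Log (pmax X n ω) / Log n)) atTop with hLdef
  refine le_antisymm ?_ ?_
  · by_cases htop : ρ₁⁻¹ = ⊤
    · rw [htop]; exact le_top
    · by_contra hc
      push_neg at hc
      by_cases hLtop : L = ⊤
      · obtain ⟨q, hq⟩ := exists_rat_gt (ρ₁⁻¹.toReal)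
        have h1 : ρ₁⁻¹ < ENNReal.ofReal (q:ℝ) := (ENNReal.lt_ofReal_iff_toReal_lt htop).2 hq
        have h2 := hu q h1
        rw [hLtop] at h2
        exact absurd h2 (by simp)
      · have h2 : ρ₁⁻¹.toReal < L.toReal := ENNReal.toReal_strict_mono hLtop hc
        obtain ⟨q, hq1, hq2⟩ := exists_rat_btwn h2
        have h3 : ρ₁⁻¹ < ENNReal.ofReal (q:ℝ) := (ENNReal.lt_ofReal_iff_toReal_lt htop).2 hq1
        have h4 : ENNReal.ofReal (q:ℝ) < L := by
          rw [ENNReal.ofReal_lt_iff_lt_toReal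
            (le_of_lt (lt_of_le_of_lt ENNReal.toReal_nonneg hq1)) hLtop]
          exact hq2
        exact absurd (hu q h3) (not_le.2 h4)
  · by_cases hzero : ρ₁⁻¹ = 0
    · rw [hzero]; exact zero_le
    · by_contra hc
      push_neg at hc
      have hLne : L ≠ ⊤ := ne_top_of_lt hc
      by_cases htop : ρ₁⁻¹ = ⊤
      · obtain ⟨q, hq⟩ := exists_rat_gt (L.toReal)
        have h1 : L < ENNReal.ofReal (q:ℝ) := (ENNReal.lt_ofReal_iff_toReal_lt hLne).2 hq
        have h2 : ENNReal.ofReal (q:ℝ) < ρ₁⁻¹ := htop ▸ ENNReal.ofReal_lt_top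
        exact absurd (hl q h2) (not_le.2 h1)
      · have h2 : L.toReal < ρ₁⁻¹.toReal := ENNReal.toReal_strict_mono htop hc
        obtain ⟨q, hq1, hq2⟩ := exists_rat_btwn h2
        have h3 : L < ENNReal.ofReal (q:ℝ) := (ENNReal.lt_ofReal_iff_toReal_lt hLne).2 hq1
        have h4 : ENNReal.ofReal (q:ℝ) < ρ₁⁻¹ := by
          rw [ENNReal.ofReal_lt_iff_lt_toReal
            (le_of_lt (lt_of_le_of_lt ENNReal.toReal_nonneg hq1)) htop]
          exact hq2
        exact absurd (hl q h4) (not_le.2 h3)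
end

section
/- Let {X_n} be i.i.d. random variables and ρ₂ = sup{r ≥ 0 : liminf_{x→∞} x^r P(X > x) = 0}. If 0 ≤ ρ₂ < ∞, then there exists an increasing sequence of positive integers {m_n} such that (log max_{1≤k≤m_n} X_k)/(log m_n) → 1/ρ₂ almost surely. -/
open MeasureTheory ProbabilityTheory Filter
open scoped ENNReal

set_option linter.unusedSectionVars false
set_option linter.unusedVariables false
set_option maxHeartbeats 1000000

lemma exp_one_le_three : Real.exp 1 ≤ 3 := by
  have := Real.exp_one_lt_d9
  linarith

lemma sSup_extract_lt (S : Set ℝ) (ρ : ℝ)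
    (hsup : sSup (ENNReal.ofReal '' S) = ENNReal.ofReal ρ)
    {δ : ℝ} (hδ : 0 < δ) (hρpos : 0 < ρ) :
    ∃ r ∈ S, ρ - δ < r ∧ r ≤ ρ := by
  have h1 : ENNReal.ofReal (ρ - δ) < sSup (ENNReal.ofReal '' S) := by
    rw [hsup]
    exact ENNReal.ofReal_lt_ofReal_iff hρpos |>.mpr (by linarith)
  rw [lt_sSup_iff] at h1
  obtain ⟨a, ⟨r, hrS, rfl⟩, hlt⟩ := h1
  refine ⟨r, hrS, ?_, ?_⟩
  · by_contra hcon
    push_neg at hcon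
    exact absurd (ENNReal.ofReal_le_ofReal hcon) (not_le.mpr hlt)
  · have h2 : ENNReal.ofReal r ≤ ENNReal.ofReal ρ :=
      hsup ▸ le_sSup ⟨r, hrS, rfl⟩
    rwa [ENNReal.ofReal_le_ofReal_iff hρpos.le] at h2

lemma sSup_not_mem (S : Set ℝ) (ρ : ℝ) (hρnn : 0 ≤ ρ)
    (hsup : sSup (ENNReal.ofReal '' S) = ENNReal.ofReal ρ)
    {s : ℝ} (hs : ρ < s) : s ∉ S := by
  intro hmem
  have h2 : ENNReal.ofReal s ≤ ENNReal.ofReal ρ := hsup ▸ le_sSup ⟨s, hmem, rfl⟩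
  rw [ENNReal.ofReal_le_ofReal_iff hρnn] at h2
  linarith

lemma tail_lower (G : ℝ → ℝ≥0∞) {s : ℝ}
    (h : Filter.liminf (fun x : ℝ => ENNReal.ofReal (x ^ s) * G x) atTop ≠ 0) :
    ∃ e : ℝ, 0 < e ∧ e ≤ 1 ∧ ∃ A : ℝ, 1 ≤ A ∧
      ∀ y, A ≤ y → ENNReal.ofReal (e * y ^ (-s)) ≤ G y := by
  set L := Filter.liminf (fun x : ℝ => ENNReal.ofReal (x ^ s) * G x) atTop with hL
  have hpos : 0 < min L 1 := lt_min (pos_iff_ne_zero.mpr h) one_pos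
  obtain ⟨ε, hε0, hεlt⟩ := exists_between hpos
  have hεtop : ε ≠ ⊤ := (hεlt.trans_le (min_le_right _ _)).ne_top
  have hε1 : ε ≤ 1 := (hεlt.le.trans (min_le_right _ _))
  have hev : ∀ᶠ x in atTop, ε < ENNReal.ofReal (x ^ s) * G x :=
    eventually_lt_of_lt_liminf (hεlt.trans_le (min_le_left _ _))
  rw [eventually_atTop] at hev
  obtain ⟨A₀, hA⟩ := hev
  refine ⟨ε.toReal, ENNReal.toReal_pos hε0.ne' hεtop, ?_, max A₀ 1, le_max_right _ _, ?_⟩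
  · exact ENNReal.toReal_le_of_le_ofReal zero_le_one (by simpa using hε1)
  · intro y hy
    have hy1 : (1:ℝ) ≤ y := (le_max_right _ _).trans hy
    have hys : (0:ℝ) < y ^ s := Real.rpow_pos_of_pos (by linarith) s
    have hkey := (hA y ((le_max_left _ _).trans hy)).le
    have hc0 : ENNReal.ofReal (y ^ s) ≠ 0 := by
      simpa [ENNReal.ofReal_eq_zero, not_le] using hys
    have hctop : ENNReal.ofReal (y ^ s) ≠ ⊤ := ENNReal.ofReal_ne_top
    have hgoal : ENNReal.ofReal (ε.toReal * y ^ (-s))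
        = ε * (ENNReal.ofReal (y ^ s))⁻¹ := by
      rw [ENNReal.ofReal_mul ENNReal.toReal_nonneg, ENNReal.ofReal_toReal hεtop,
        Real.rpow_neg (by linarith), ENNReal.ofReal_inv_of_pos hys]
    rw [hgoal]
    calc ε * (ENNReal.ofReal (y ^ s))⁻¹
        ≤ (ENNReal.ofReal (y ^ s) * G y) * (ENNReal.ofReal (y ^ s))⁻¹ :=
          mul_le_mul_left hkey _
      _ = G y * (ENNReal.ofReal (y ^ s) * (ENNReal.ofReal (y ^ s))⁻¹) := by ring
      _ = G y := by rw [ENNReal.mul_inv_cancel hc0 hctop, mul_one]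

lemma rec_choice {α : Type*} (Q : ℕ → ℕ → α → Prop)
    (h : ∀ k p, ∃ mk a, p < mk ∧ Q k mk a) :
    ∃ (f : ℕ → ℕ) (g : ℕ → α), StrictMono f ∧ ∀ k, Q k (f k) (g k) := by
  choose mk a hlt hQ using h
  let F : ℕ → ℕ × α := fun k =>
    Nat.rec (⟨mk 0 0, a 0 0⟩) (fun j ih => ⟨mk (j+1) ih.1, a (j+1) ih.1⟩) k
  refine ⟨fun k => (F k).1, fun k => (F k).2, ?_, ?_⟩
  · apply strictMono_nat_of_lt_succ
    intro n
    exact hlt (n+1) (F n).1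
  · intro k
    cases k with
    | zero => exact hQ 0 0
    | succ j => exact hQ (j+1) (F j).1

section helpers
variable {Ω : Type*} [MeasurableSpace Ω] {μ : Measure Ω} [IsProbabilityMeasure μ]
  {X : ℕ → Ω → ℝ}

lemma pmax_le_iff {n : ℕ} (hn : n ≠ 0) (ω : Ω) (x : ℝ) :
    pmax X n ω ≤ x ↔ ∀ k ∈ Finset.range n, X k ω ≤ x := by
  simp [pmax, hn, Finset.sup'_le_iff]

lemma lt_pmax_iff {n : ℕ} (hn : n ≠ 0) (ω : Ω) (x : ℝ) :
    x < pmax X n ω ↔ ∃ k ∈ Finset.range n, x < X k ω := by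
  simp [pmax, hn, Finset.lt_sup'_iff]

lemma meas_pmax_gt_le (hident : ∀ n, IdentDistrib (X n) (X 0) μ μ)
    {n : ℕ} (hn : n ≠ 0) (x : ℝ) :
    μ {ω | pmax X n ω > x} ≤ n * μ {ω | X 0 ω > x} := by
  have hset : {ω | pmax X n ω > x} = ⋃ k ∈ Finset.range n, X k ⁻¹' Set.Ioi x := by
    ext ω; simp [gt_iff_lt, lt_pmax_iff hn, Set.mem_Ioi]
  rw [hset]
  refine (measure_biUnion_finset_le _ _).trans ?_
  have h1 : ∀ k, μ (X k ⁻¹' Set.Ioi x) = μ {ω | X 0 ω > x} := fun k =>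
    (hident k).measure_mem_eq measurableSet_Ioi
  simp [h1, Finset.sum_const]

lemma meas_pmax_le_eq (hindep : iIndepFun X μ)
    (hident : ∀ n, IdentDistrib (X n) (X 0) μ μ)
    {n : ℕ} (hn : n ≠ 0) (x : ℝ) :
    μ {ω | pmax X n ω ≤ x} = (μ {ω | X 0 ω ≤ x}) ^ n := by
  have hset : {ω | pmax X n ω ≤ x} = ⋂ k ∈ Finset.range n, X k ⁻¹' Set.Iic x := by
    ext ω; simp [pmax_le_iff hn, Set.mem_Iic]
  rw [hset, hindep.meas_biInter (fun k _ => ⟨Set.Iic x, measurableSet_Iic, rfl⟩)]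
  have h1 : ∀ k, μ (X k ⁻¹' Set.Iic x) = μ {ω | X 0 ω ≤ x} := fun k =>
    (hident k).measure_mem_eq measurableSet_Iic
  simp [h1]

lemma pow_le_exp_bound {n : ℕ} {y t : ℝ} (hmeas : ∀ n, Measurable (X n)) (ht : 0 ≤ t)
    (hG : ENNReal.ofReal t ≤ μ {ω | X 0 ω > y}) :
    (μ {ω | X 0 ω ≤ y}) ^ n ≤ ENNReal.ofReal (Real.exp (-(n * t))) := by
  have hms : MeasurableSet {ω | X 0 ω ≤ y} := (hmeas 0) measurableSet_Iic
  have hsum : μ {ω | X 0 ω ≤ y} + μ {ω | X 0 ω > y} = 1 := by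
    have hc : {ω | X 0 ω > y} = {ω | X 0 ω ≤ y}ᶜ := by ext ω; simp [not_le]
    rw [hc]; simpa using measure_add_measure_compl (μ := μ) hms
  rcases le_or_gt t 1 with ht1 | ht1
  · have hp : μ {ω | X 0 ω ≤ y} ≤ ENNReal.ofReal (1 - t) := by
      have h1 : μ {ω | X 0 ω ≤ y} + ENNReal.ofReal t ≤ 1 := by
        calc μ {ω | X 0 ω ≤ y} + ENNReal.ofReal t
            ≤ μ {ω | X 0 ω ≤ y} + μ {ω | X 0 ω > y} := by gcongr
          _ = 1 := hsum
      have h2 := ENNReal.le_sub_of_add_le_right ENNReal.ofReal_ne_top h1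
      rwa [← ENNReal.ofReal_one, ← ENNReal.ofReal_sub _ ht] at h2
    calc (μ {ω | X 0 ω ≤ y}) ^ n ≤ (ENNReal.ofReal (1 - t)) ^ n := pow_le_pow_left' hp n
      _ = ENNReal.ofReal ((1 - t) ^ n) := by rw [ENNReal.ofReal_pow (by linarith)]
      _ ≤ ENNReal.ofReal (Real.exp (-(n * t))) := by
          apply ENNReal.ofReal_le_ofReal
          have h2 : (1 - t) ≤ Real.exp (-t) := by
            have := Real.add_one_le_exp (-t); linarith
          calc (1 - t) ^ n ≤ (Real.exp (-t)) ^ n := pow_le_pow_left₀ (by linarith) h2 n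
            _ = Real.exp (n * (-t)) := (Real.exp_nat_mul _ n).symm
            _ = Real.exp (-(n * t)) := by ring_nf
  · exfalso
    have h2 : ENNReal.ofReal t ≤ 1 := hG.trans prob_le_one
    rw [ENNReal.ofReal_le_one] at h2
    linarith

lemma half_pow (k : ℕ) : ENNReal.ofReal ((2⁻¹ : ℝ) ^ k) = (2⁻¹ : ℝ≥0∞) ^ k := by
  rw [ENNReal.ofReal_pow (by norm_num)]
  congr 1
  rw [ENNReal.ofReal_inv_of_pos (by norm_num)]
  norm_num

lemma exp_neg_klog2 (k : ℕ) : Real.exp (-(k * Real.log 2)) = (2⁻¹ : ℝ) ^ k := by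
  have h1 : Real.log ((2⁻¹ : ℝ) ^ k) = -(k * Real.log 2) := by
    rw [Real.log_pow, Real.log_inv]; ring
  rw [← h1, Real.exp_log (by positivity)]

/-- Stage existence lemma for the main case. -/
lemma exists_stage (hmeas : ∀ n, Measurable (X n))
    (hindep : iIndepFun X μ)
    (hident : ∀ n, IdentDistrib (X n) (X 0) μ μ)
    {r s s' e A : ℝ} (hr : 0 < r)
    (hliminf0 : Filter.liminf
      (fun x : ℝ => ENNReal.ofReal (x ^ r) * μ {ω | X 0 ω > x}) atTop = 0)
    (he : 0 < e) (hA : 1 ≤ A)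
    (hAbound : ∀ y, A ≤ y → ENNReal.ofReal (e * y ^ (-s)) ≤ μ {ω | X 0 ω > y})
    (hspos : 0 < s) (hss' : s < s')
    (k p : ℕ) :
    ∃ (mk : ℕ) (x : ℝ), p < mk ∧ 3 ≤ mk ∧ Real.exp 1 ≤ x ∧
      x ^ r ≤ (mk : ℝ) ∧ (mk : ℝ) ≤ 2 * x ^ r ∧ Real.exp s' ≤ (mk : ℝ) ∧
      μ {ω | pmax X mk ω > x} ≤ 2 * (2⁻¹ : ℝ≥0∞) ^ k ∧
      μ {ω | pmax X mk ω ≤ (mk : ℝ) ^ (s'⁻¹)} ≤ (2⁻¹ : ℝ≥0∞) ^ k := by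
  have hs'pos : 0 < s' := hspos.trans hss'
  set θ : ℝ := 1 - s'⁻¹ * s with hθ
  have hθpos : 0 < θ := by
    have : s'⁻¹ * s < 1 := by
      rw [inv_mul_lt_iff₀ hs'pos]; linarith
    simp only [hθ]; linarith
  set C : ℝ := max (max ((p : ℝ) + 3) (Real.exp s'))
      (max (A ^ s') ((max 1 ((k * Real.log 2) / e)) ^ θ⁻¹)) with hC
  have hfreq : ∃ᶠ x in atTop,
      ENNReal.ofReal (x ^ r) * μ {ω | X 0 ω > x} < (2⁻¹ : ℝ≥0∞) ^ k :=
    frequently_lt_of_liminf_lt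
      (h := by rw [hliminf0]; exact ENNReal.pow_pos (by norm_num) k)
  have hev : ∀ᶠ x : ℝ in atTop, Real.exp 1 ≤ x ∧ C ≤ x ^ r :=
    (eventually_ge_atTop (Real.exp 1)).and ((tendsto_rpow_atTop hr).eventually_ge_atTop C)
  obtain ⟨x, hsmall, hxe, hxC⟩ := (hfreq.and_eventually hev).exists
  set mk := ⌈x ^ r⌉₊ with hmk
  have hCp3 : (p : ℝ) + 3 ≤ C := le_trans (le_max_left _ _) (le_max_left _ _)
  have hCexp : Real.exp s' ≤ C := le_trans (le_max_right _ _) (le_max_left _ _)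
  have hCA : A ^ s' ≤ C := le_trans (le_max_left _ _) (le_max_right _ _)
  have hCB : (max 1 ((k * Real.log 2) / e)) ^ θ⁻¹ ≤ C :=
    le_trans (le_max_right _ _) (le_max_right _ _)
  have hxr3 : (3:ℝ) ≤ x ^ r := by
    have : (p:ℝ) + 3 ≤ x ^ r := hCp3.trans hxC
    have hp0 : (0:ℝ) ≤ (p:ℝ) := Nat.cast_nonneg p
    linarith
  have hxr1 : (1:ℝ) ≤ x ^ r := by linarith
  have hmk_ge : x ^ r ≤ (mk : ℝ) := Nat.le_ceil _
  have hmk_le : (mk : ℝ) ≤ 2 * x ^ r := by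
    have := Nat.ceil_lt_add_one (by linarith : (0:ℝ) ≤ x ^ r)
    linarith
  have hmkpos : 0 < mk := Nat.ceil_pos.mpr (by linarith)
  have hmkne : mk ≠ 0 := hmkpos.ne'
  have hp_lt : p < mk := by
    have : (p:ℝ) + 3 ≤ (mk:ℝ) := (hCp3.trans hxC).trans hmk_ge
    exact_mod_cast (by linarith : (p:ℝ) < (mk:ℝ))
  have h3mk : 3 ≤ mk := by
    have : (3:ℝ) ≤ (mk:ℝ) := hxr3.trans hmk_ge
    exact_mod_cast this
  have hexpmk : Real.exp s' ≤ (mk:ℝ) := (hCexp.trans hxC).trans hmk_ge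
  have hmkposR : (0:ℝ) < (mk:ℝ) := by positivity
  refine ⟨mk, x, hp_lt, h3mk, hxe, hmk_ge, hmk_le, hexpmk, ?_, ?_⟩
  · -- union bound
    calc μ {ω | pmax X mk ω > x} ≤ (mk : ℝ≥0∞) * μ {ω | X 0 ω > x} :=
          meas_pmax_gt_le hident hmkne x
      _ ≤ ENNReal.ofReal (2 * x ^ r) * μ {ω | X 0 ω > x} := by
          gcongr
          rw [← ENNReal.ofReal_natCast mk]
          exact ENNReal.ofReal_le_ofReal hmk_le
      _ = 2 * (ENNReal.ofReal (x ^ r) * μ {ω | X 0 ω > x}) := by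
          rw [ENNReal.ofReal_mul (by norm_num), ENNReal.ofReal_ofNat, mul_assoc]
      _ ≤ 2 * (2⁻¹ : ℝ≥0∞) ^ k := mul_le_mul_right hsmall.le 2
  · -- lower tail bound
    set y : ℝ := (mk : ℝ) ^ (s'⁻¹) with hy
    have hyA : A ≤ y := by
      have h1 : A = (A ^ s') ^ s'⁻¹ := (Real.rpow_rpow_inv (by linarith) hs'pos.ne').symm
      rw [h1, hy]
      exact Real.rpow_le_rpow (by positivity) ((hCA.trans hxC).trans hmk_ge)
        (by positivity)
    have htail := hAbound y hyA
    have ht0 : 0 ≤ e * y ^ (-s) := by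
      have : (0:ℝ) < y := lt_of_lt_of_le one_pos (hA.trans hyA)
      positivity
    have hbound := (meas_pmax_le_eq hindep hident hmkne y).le.trans
      (pow_le_exp_bound hmeas ht0 htail)
    refine hbound.trans ?_
    rw [← half_pow, ← exp_neg_klog2]
    apply ENNReal.ofReal_le_ofReal
    apply Real.exp_le_exp.mpr
    rw [neg_le_neg_iff]
    -- k * log 2 ≤ mk * (e * y ^ (-s))
    have hyexp : y ^ (-s) = (mk:ℝ) ^ (s'⁻¹ * (-s)) := by
      rw [hy, ← Real.rpow_mul (Nat.cast_nonneg mk)]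
    have hcalc : (mk:ℝ) * (e * y ^ (-s)) = e * (mk:ℝ) ^ θ := by
      rw [hyexp]
      calc (mk:ℝ) * (e * (mk:ℝ) ^ (s'⁻¹ * (-s)))
          = e * ((mk:ℝ) ^ (1:ℝ) * (mk:ℝ) ^ (s'⁻¹ * (-s))) := by rw [Real.rpow_one]; ring
        _ = e * (mk:ℝ) ^ (1 + s'⁻¹ * (-s)) := by rw [← Real.rpow_add hmkposR]
        _ = e * (mk:ℝ) ^ θ := by rw [hθ]; ring_nf
    have hmkθ : (1 ⊔ ((k:ℝ) * Real.log 2 / e)) ≤ (mk:ℝ) ^ θ := by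
      have h1 : ((1 ⊔ ((k:ℝ) * Real.log 2 / e)) ^ θ⁻¹) ^ θ
          = (1 ⊔ ((k:ℝ) * Real.log 2 / e)) :=
        Real.rpow_inv_rpow (by positivity) hθpos.ne'
      rw [← h1]
      exact Real.rpow_le_rpow (by positivity) ((hCB.trans hxC).trans hmk_ge) hθpos.le
    have h2 : (k:ℝ) * Real.log 2 / e ≤ (mk:ℝ) ^ θ := le_trans (le_max_right _ _) hmkθ
    rw [div_le_iff₀ he] at h2
    rw [hcalc]
    nlinarith

/-- Stage existence lemma for the `ρ₂ = 0` case. -/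
lemma exists_stageA (hmeas : ∀ n, Measurable (X n))
    (hindep : iIndepFun X μ)
    (hident : ∀ n, IdentDistrib (X n) (X 0) μ μ)
    {s e A : ℝ} (he : 0 < e) (hA : 1 ≤ A)
    (hAbound : ∀ y, A ≤ y → ENNReal.ofReal (e * y ^ (-s)) ≤ μ {ω | X 0 ω > y})
    (k p : ℕ) (hs : s = (2 * ((k : ℝ) + 1))⁻¹) :
    ∃ mk : ℕ, p < mk ∧ 3 ≤ mk ∧
      μ {ω | pmax X mk ω ≤ (mk : ℝ) ^ ((k : ℝ) + 1)} ≤ (2⁻¹ : ℝ≥0∞) ^ k := by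
  have hspos : 0 < s := by rw [hs]; positivity
  set B : ℝ := (1 ⊔ ((k : ℝ) * Real.log 2 / e)) ^ ((2:ℝ)⁻¹)⁻¹ with hB
  obtain ⟨n0, hn0⟩ := exists_nat_ge (max 3 (max A B))
  set mk := max n0 (p + 1) with hmkdef
  have hn0mk : (n0 : ℝ) ≤ (mk : ℝ) := by exact_mod_cast Nat.cast_le.mpr (le_max_left _ _)
  have hmk3R : (3:ℝ) ≤ (mk:ℝ) :=
    le_trans (le_trans (le_max_left _ _) hn0) hn0mk
  have hmkA : A ≤ (mk:ℝ) :=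
    le_trans (le_trans (le_trans (le_max_left _ _) (le_max_right _ _)) hn0) hn0mk
  have hmkB : B ≤ (mk:ℝ) :=
    le_trans (le_trans (le_trans (le_max_right _ _) (le_max_right _ _)) hn0) hn0mk
  have hmk1R : (1:ℝ) ≤ (mk:ℝ) := by linarith
  have hmkposR : (0:ℝ) < (mk:ℝ) := by linarith
  have hmkne : mk ≠ 0 := by
    intro h; rw [h] at hmkposR; simp at hmkposR
  refine ⟨mk, lt_of_lt_of_le (Nat.lt_succ_self p) (le_max_right _ _), by exact_mod_cast hmk3R, ?_⟩
  set y : ℝ := (mk : ℝ) ^ ((k : ℝ) + 1) with hy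
  have hyA : A ≤ y := by
    calc A ≤ (mk:ℝ) := hmkA
      _ = (mk:ℝ) ^ (1:ℝ) := (Real.rpow_one _).symm
      _ ≤ y := Real.rpow_le_rpow_of_exponent_le hmk1R (by push_cast; linarith)
  have htail := hAbound y hyA
  have hypos : (0:ℝ) < y := lt_of_lt_of_le (by linarith : (0:ℝ) < A) hyA
  have ht0 : 0 ≤ e * y ^ (-s) := by positivity
  have hbound := (meas_pmax_le_eq hindep hident hmkne y).le.trans
    (pow_le_exp_bound hmeas ht0 htail)
  refine hbound.trans ?_
  rw [← half_pow, ← exp_neg_klog2]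
  apply ENNReal.ofReal_le_ofReal
  apply Real.exp_le_exp.mpr
  rw [neg_le_neg_iff]
  have hks : ((k:ℝ) + 1) * (-s) = -(2:ℝ)⁻¹ := by
    rw [hs]; field_simp
  have hyexp : y ^ (-s) = (mk:ℝ) ^ (-(2:ℝ)⁻¹) := by
    rw [hy, ← Real.rpow_mul (Nat.cast_nonneg mk), hks]
  have hcalc : (mk:ℝ) * (e * y ^ (-s)) = e * (mk:ℝ) ^ ((2:ℝ)⁻¹) := by
    rw [hyexp]
    calc (mk:ℝ) * (e * (mk:ℝ) ^ (-(2:ℝ)⁻¹))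
        = e * ((mk:ℝ) ^ (1:ℝ) * (mk:ℝ) ^ (-(2:ℝ)⁻¹)) := by rw [Real.rpow_one]; ring
      _ = e * (mk:ℝ) ^ (1 + -(2:ℝ)⁻¹) := by rw [← Real.rpow_add hmkposR]
      _ = e * (mk:ℝ) ^ ((2:ℝ)⁻¹) := by norm_num
  have hmkθ : (1 ⊔ ((k:ℝ) * Real.log 2 / e)) ≤ (mk:ℝ) ^ ((2:ℝ)⁻¹) := by
    have h1 : (B) ^ ((2:ℝ)⁻¹) = (1 ⊔ ((k:ℝ) * Real.log 2 / e)) := by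
      rw [hB]
      exact Real.rpow_inv_rpow (by positivity) (by norm_num)
    rw [← h1]
    exact Real.rpow_le_rpow (by positivity) hmkB (by norm_num)
  have h2 : (k:ℝ) * Real.log 2 / e ≤ (mk:ℝ) ^ ((2:ℝ)⁻¹) := le_trans (le_max_right _ _) hmkθ
  rw [div_le_iff₀ he] at h2
  rw [hcalc]
  nlinarith

end helpers

theorem stmt7 {Ω : Type*} [MeasurableSpace Ω] (μ : Measure Ω) [IsProbabilityMeasure μ]
    (X : ℕ → Ω → ℝ) (hmeas : ∀ n, Measurable (X n))
    (hindep : iIndepFun X μ)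
    (hident : ∀ n, IdentDistrib (X n) (X 0) μ μ)
    (ρ₂ : ℝ≥0∞)
    (hρ₂ : ρ₂ = sSup (ENNReal.ofReal '' {r : ℝ | 0 ≤ r ∧
        Filter.liminf (fun x : ℝ => ENNReal.ofReal (x ^ r) * μ {ω | X 0 ω > x}) atTop = 0}))
    (hfin : ρ₂ < ⊤) :
    ∃ m : ℕ → ℕ, StrictMono m ∧ (∀ n, 1 ≤ m n) ∧
      ∀ᵐ ω ∂μ,
        Tendsto (fun n : ℕ => ENNReal.ofReal (Log (pmax X (m n) ω) / Log (m n))) atTop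
          (nhds ρ₂⁻¹) := by
  classical
  set S : Set ℝ := {r : ℝ | 0 ≤ r ∧
      Filter.liminf (fun x : ℝ => ENNReal.ofReal (x ^ r) * μ {ω | X 0 ω > x}) atTop = 0}
    with hSdef
  rcases eq_or_ne ρ₂ 0 with hρ0 | hρ0
  · -- Case ρ₂ = 0 : the ratio tends to ∞
    have hSsup : sSup (ENNReal.ofReal '' S) = 0 := by rw [← hρ₂, hρ0]
    have hnot : ∀ t : ℝ, 0 < t →
        Filter.liminf (fun x : ℝ => ENNReal.ofReal (x ^ t) * μ {ω | X 0 ω > x}) atTop ≠ 0 := by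
      intro t ht h0
      have h1 : ENNReal.ofReal t ≤ 0 := hSsup ▸ le_sSup ⟨t, ⟨ht.le, h0⟩, rfl⟩
      rw [le_zero_iff, ENNReal.ofReal_eq_zero] at h1
      linarith
    have hex := fun k : ℕ => tail_lower _
      (hnot ((2 * ((k:ℝ) + 1))⁻¹) (by positivity))
    choose e he0 he1 A hA1 hAb using hex
    have hstage : ∀ (k p : ℕ), ∃ (mk : ℕ) (u : Unit), p < mk ∧ (3 ≤ mk ∧
        μ {ω | pmax X mk ω ≤ (mk : ℝ) ^ ((k : ℝ) + 1)} ≤ (2⁻¹ : ℝ≥0∞) ^ k) := by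
      intro k p
      obtain ⟨mk, h1, h2, h3⟩ :=
        exists_stageA hmeas hindep hident (he0 k) (hA1 k) (hAb k) k p rfl
      exact ⟨mk, (), h1, h2, h3⟩
    obtain ⟨m, _, hmono, hQ⟩ := rec_choice _ hstage
    refine ⟨m, hmono, fun n => by have := (hQ n).1; omega, ?_⟩
    have hsum : ∑' k, μ {ω | pmax X (m k) ω ≤ ((m k : ℕ) : ℝ) ^ ((k : ℝ) + 1)} ≠ ⊤ := by
      refine ne_top_of_le_ne_top ?_ (ENNReal.tsum_le_tsum (fun k => (hQ k).2))
      rw [ENNReal.tsum_geometric, ENNReal.one_sub_inv_two, inv_inv]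
      norm_num
    have hae := ae_eventually_notMem hsum
    rw [hρ0, ENNReal.inv_zero]
    filter_upwards [hae] with ω hω
    have hev : ∀ᶠ n : ℕ in atTop,
        ((n : ℝ) + 1) ≤ Log (pmax X (m n) ω) / Log (m n) := by
      filter_upwards [hω] with n hn
      have hgt : ((m n : ℕ) : ℝ) ^ ((n : ℝ) + 1) < pmax X (m n) ω := not_le.mp hn
      have hM3 : (3 : ℝ) ≤ ((m n : ℕ) : ℝ) := by exact_mod_cast (hQ n).1
      have hMe : Real.exp 1 ≤ ((m n : ℕ) : ℝ) := exp_one_le_three.trans hM3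
      have hM1 : (1 : ℝ) < ((m n : ℕ) : ℝ) := by linarith
      have hMpos : (0 : ℝ) < ((m n : ℕ) : ℝ) := by linarith
      have hye : Real.exp 1 ≤ ((m n : ℕ) : ℝ) ^ ((n : ℝ) + 1) := by
        calc Real.exp 1 ≤ ((m n : ℕ) : ℝ) := hMe
          _ = ((m n : ℕ) : ℝ) ^ (1 : ℝ) := (Real.rpow_one _).symm
          _ ≤ _ := Real.rpow_le_rpow_of_exponent_le hM1.le
              (by have := Nat.cast_nonneg (α := ℝ) n; linarith)
      have hlogpos : 0 < Real.log ((m n : ℕ) : ℝ) := Real.log_pos hM1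
      rw [Log_of_exp_le hMe, le_div_iff₀ hlogpos]
      calc ((n : ℝ) + 1) * Real.log ((m n : ℕ) : ℝ)
          = Real.log (((m n : ℕ) : ℝ) ^ ((n : ℝ) + 1)) := (Real.log_rpow hMpos _).symm
        _ = Log (((m n : ℕ) : ℝ) ^ ((n : ℝ) + 1)) := (Log_of_exp_le hye).symm
        _ ≤ Log (pmax X (m n) ω) := Log_mono hgt.le
    have htend : Tendsto (fun n => Log (pmax X (m n) ω) / Log (m n)) atTop atTop :=
      tendsto_atTop_mono' atTop hev
        (tendsto_atTop_add_const_right _ 1 tendsto_natCast_atTop_atTop)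
    exact ENNReal.tendsto_ofReal_atTop.comp htend
  · -- Case 0 < ρ₂ < ∞
    have hρpos : 0 < ρ₂.toReal := ENNReal.toReal_pos hρ0 hfin.ne
    set ρ : ℝ := ρ₂.toReal with hρ
    have hsup : sSup (ENNReal.ofReal '' S) = ENNReal.ofReal ρ := by
      rw [← hρ₂, hρ, ENNReal.ofReal_toReal hfin.ne]
    set δ : ℕ → ℝ := fun k => ρ / ((k : ℝ) + 2) with hδdef
    have hδpos : ∀ k, 0 < δ k := fun k => div_pos hρpos (by positivity)
    have hδlt : ∀ k, δ k < ρ := by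
      intro k
      rw [hδdef, div_lt_iff₀ (by positivity : (0:ℝ) < (k:ℝ) + 2)]
      nlinarith [Nat.cast_nonneg (α := ℝ) k]
    have hδ0 : Tendsto δ atTop (nhds 0) :=
      Tendsto.div_atTop tendsto_const_nhds
        (tendsto_atTop_add_const_right _ 2 tendsto_natCast_atTop_atTop)
    have hrex := fun k : ℕ => sSup_extract_lt S ρ hsup (hδpos k) hρpos
    choose r hrS hrlt hrle using hrex
    have hrpos : ∀ k, 0 < r k := fun k => by have := hδlt k; have := hrlt k; linarith
    have hsnot : ∀ k, Filter.liminf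
        (fun x : ℝ => ENNReal.ofReal (x ^ (ρ + δ k)) * μ {ω | X 0 ω > x}) atTop ≠ 0 := by
      intro k h0
      exact sSup_not_mem S ρ hρpos.le hsup
        (by have := hδpos k; linarith : ρ < ρ + δ k) ⟨by positivity, h0⟩
    choose e he0 he1 A hA1 hAb using fun k => tail_lower _ (hsnot k)
    have hstage : ∀ (k p : ℕ), ∃ (mk : ℕ) (x : ℝ), p < mk ∧ (3 ≤ mk ∧ Real.exp 1 ≤ x ∧
        x ^ r k ≤ (mk : ℝ) ∧ (mk : ℝ) ≤ 2 * x ^ r k ∧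
        Real.exp (ρ + 2 * δ k) ≤ (mk : ℝ) ∧
        μ {ω | pmax X mk ω > x} ≤ 2 * (2⁻¹ : ℝ≥0∞) ^ k ∧
        μ {ω | pmax X mk ω ≤ (mk : ℝ) ^ ((ρ + 2 * δ k)⁻¹)} ≤ (2⁻¹ : ℝ≥0∞) ^ k) := by
      intro k p
      obtain ⟨mk, x, h1, h2, h3, h4, h5, h6, h7, h8⟩ :=
        exists_stage hmeas hindep hident (hrpos k) (hrS k).2 (he0 k) (hA1 k) (hAb k)
          (by have := hδpos k; linarith : (0:ℝ) < ρ + δ k)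
          (by have := hδpos k; linarith : ρ + δ k < ρ + 2 * δ k) k p
      exact ⟨mk, x, h1, h2, h3, h4, h5, h6, h7, h8⟩
    obtain ⟨m, xx, hmono, hQ⟩ := rec_choice _ hstage
    refine ⟨m, hmono, fun n => by have := (hQ n).1; omega, ?_⟩
    have hsumE : ∑' k, μ {ω | pmax X (m k) ω > xx k} ≠ ⊤ := by
      refine ne_top_of_le_ne_top ?_
        (ENNReal.tsum_le_tsum (fun k => (hQ k).2.2.2.2.2.1))
      rw [ENNReal.tsum_mul_left, ENNReal.tsum_geometric, ENNReal.one_sub_inv_two,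
        inv_inv]
      norm_num
    have hsumD : ∑' k, μ {ω | pmax X (m k) ω ≤ ((m k : ℕ) : ℝ) ^ ((ρ + 2 * δ k)⁻¹)} ≠ ⊤ := by
      refine ne_top_of_le_ne_top ?_
        (ENNReal.tsum_le_tsum (fun k => (hQ k).2.2.2.2.2.2))
      rw [ENNReal.tsum_geometric, ENNReal.one_sub_inv_two, inv_inv]
      norm_num
    have hinv : ρ₂⁻¹ = ENNReal.ofReal (ρ⁻¹) := by
      rw [ENNReal.ofReal_inv_of_pos hρpos, hρ, ENNReal.ofReal_toReal hfin.ne]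
    rw [hinv]
    filter_upwards [ae_eventually_notMem hsumE, ae_eventually_notMem hsumD]
      with ω h1 h2
    have hs'lim : Tendsto (fun k => (ρ + 2 * δ k)⁻¹) atTop (nhds ρ⁻¹) := by
      have h3 : Tendsto (fun k => ρ + 2 * δ k) atTop (nhds ρ) := by
        have := tendsto_const_nhds (x := ρ) (f := atTop (α := ℕ)) |>.add
          (hδ0.const_mul 2)
        simpa using this
      exact h3.inv₀ hρpos.ne'
    have hrlim : Tendsto (fun k => (r k)⁻¹) atTop (nhds ρ⁻¹) := by
      have h3 : Tendsto r atTop (nhds ρ) := by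
        refine tendsto_of_tendsto_of_tendsto_of_le_of_le
          (g := fun k => ρ - δ k) (h := fun _ => ρ) ?_ tendsto_const_nhds
          (fun k => (hrlt k).le) hrle
        have := tendsto_const_nhds (x := ρ) (f := atTop (α := ℕ)) |>.sub hδ0
        simpa using this
      exact h3.inv₀ hρpos.ne'
    have hreal : Tendsto (fun n => Log (pmax X (m n) ω) / Log (m n)) atTop (nhds ρ⁻¹) := by
      refine tendsto_of_tendsto_of_tendsto_of_le_of_le' hs'lim hrlim ?_ ?_
      · -- lower bound
        filter_upwards [h2] with n hn
        have hygt : ((m n : ℕ) : ℝ) ^ ((ρ + 2 * δ n)⁻¹) < pmax X (m n) ω := not_le.mp hn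
        have hM3 : (3 : ℝ) ≤ ((m n : ℕ) : ℝ) := by exact_mod_cast (hQ n).1
        have hMe : Real.exp 1 ≤ ((m n : ℕ) : ℝ) := exp_one_le_three.trans hM3
        have hMpos : (0 : ℝ) < ((m n : ℕ) : ℝ) := by linarith
        have hlogpos : 0 < Real.log ((m n : ℕ) : ℝ) := Real.log_pos (by linarith)
        have hs'pos : 0 < ρ + 2 * δ n := by have := hδpos n; linarith
        have hye : Real.exp 1 ≤ ((m n : ℕ) : ℝ) ^ ((ρ + 2 * δ n)⁻¹) := by
          have hexp := (hQ n).2.2.2.2.1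
          calc Real.exp 1
              = (Real.exp (ρ + 2 * δ n)) ^ ((ρ + 2 * δ n)⁻¹) := by
                rw [Real.rpow_def_of_pos (Real.exp_pos _), Real.log_exp,
                  mul_inv_cancel₀ hs'pos.ne']
            _ ≤ _ := Real.rpow_le_rpow (Real.exp_pos _).le hexp (by positivity)
        rw [Log_of_exp_le hMe, le_div_iff₀ hlogpos]
        calc (ρ + 2 * δ n)⁻¹ * Real.log ((m n : ℕ) : ℝ)
            = Real.log (((m n : ℕ) : ℝ) ^ ((ρ + 2 * δ n)⁻¹)) := (Real.log_rpow hMpos _).symm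
          _ = Log (((m n : ℕ) : ℝ) ^ ((ρ + 2 * δ n)⁻¹)) := (Log_of_exp_le hye).symm
          _ ≤ Log (pmax X (m n) ω) := Log_mono hygt.le
      · -- upper bound
        filter_upwards [h1] with n hn
        have hle : pmax X (m n) ω ≤ xx n := not_lt.mp hn
        have hM3 : (3 : ℝ) ≤ ((m n : ℕ) : ℝ) := by exact_mod_cast (hQ n).1
        have hMe : Real.exp 1 ≤ ((m n : ℕ) : ℝ) := exp_one_le_three.trans hM3
        have hlogpos : 0 < Real.log ((m n : ℕ) : ℝ) := Real.log_pos (by linarith)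
        have hxe : Real.exp 1 ≤ xx n := (hQ n).2.1
        have hxpos : (0 : ℝ) < xx n := lt_of_lt_of_le (Real.exp_pos 1) hxe
        have hlogx1 : (1 : ℝ) ≤ Real.log (xx n) := by
          calc (1:ℝ) = Real.log (Real.exp 1) := (Real.log_exp 1).symm
            _ ≤ Real.log (xx n) := Real.log_le_log (Real.exp_pos 1) hxe
        have hrlog : r n * Real.log (xx n) ≤ Real.log ((m n : ℕ) : ℝ) := by
          calc r n * Real.log (xx n) = Real.log (xx n ^ r n) := (Real.log_rpow hxpos _).symm
            _ ≤ Real.log ((m n : ℕ) : ℝ) :=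
              Real.log_le_log (Real.rpow_pos_of_pos hxpos _) (hQ n).2.2.1
        have hrlogpos : 0 < r n * Real.log (xx n) :=
          mul_pos (hrpos n) (by linarith)
        calc Log (pmax X (m n) ω) / Log ((m n : ℕ) : ℝ)
            ≤ Real.log (xx n) / Real.log ((m n : ℕ) : ℝ) := by
              rw [Log_of_exp_le hMe]
              refine (div_le_div_iff_of_pos_right hlogpos).mpr ?_
              rw [← Log_of_exp_le hxe]
              exact Log_mono hle
          _ ≤ Real.log (xx n) / (r n * Real.log (xx n)) := by
              apply div_le_div_of_nonneg_left (by linarith) hrlogpos hrlog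
          _ = (r n)⁻¹ := by
              rw [mul_comm, ← div_div, div_self
                (by intro h; rw [h] at hlogx1; linarith : Real.log (xx n) ≠ 0), one_div]
    exact (ENNReal.continuous_ofReal.tendsto _).comp hreal
end

section
/- Let X be a random variable and 0 ≤ ρ < ∞. Then lim_{x→∞} x^r P(X > x) = 0 for all r < ρ and = ∞ for all r > ρ holds if and only if there exists a function L : (0,∞) → (0,∞) with P(X > x) ~ L(x)/x^ρ as x → ∞ and ln L(x)/ln x → 0. -/
open MeasureTheory ProbabilityTheory Filter
open scoped ENNReal

private lemma lemA_zero (f : ℝ → ℝ) (hf : ∀ᶠ x in atTop, 0 < f x) (c : ℝ)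
    (hc : Tendsto (fun x => Real.log (f x) / Real.log x) atTop (nhds c))
    (r : ℝ) (hrc : r + c < 0) :
    Tendsto (fun x : ℝ => x ^ r * f x) atTop (nhds 0) := by
  have key : (fun x : ℝ => Real.exp (Real.log x * (r + Real.log (f x) / Real.log x)))
      =ᶠ[atTop] fun x : ℝ => x ^ r * f x := by
    filter_upwards [hf, eventually_gt_atTop (1:ℝ)] with x hfx hx
    have hlx : 0 < Real.log x := Real.log_pos hx
    rw [mul_add, mul_div_cancel₀ _ hlx.ne', Real.exp_add, Real.exp_log hfx,
      ← Real.rpow_def_of_pos (by linarith)]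
  have h1 : Tendsto (fun x : ℝ => r + Real.log (f x) / Real.log x) atTop (nhds (r + c)) :=
    tendsto_const_nhds.add hc
  have h2 : Tendsto (fun x : ℝ => Real.log x * (r + Real.log (f x) / Real.log x)) atTop atBot :=
    Real.tendsto_log_atTop.atTop_mul_neg hrc h1
  exact (Real.tendsto_exp_atBot.comp h2).congr' key

private lemma lemA_top (f : ℝ → ℝ) (hf : ∀ᶠ x in atTop, 0 < f x) (c : ℝ)
    (hc : Tendsto (fun x => Real.log (f x) / Real.log x) atTop (nhds c))
    (r : ℝ) (hrc : 0 < r + c) :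
    Tendsto (fun x : ℝ => x ^ r * f x) atTop atTop := by
  have key : (fun x : ℝ => Real.exp (Real.log x * (r + Real.log (f x) / Real.log x)))
      =ᶠ[atTop] fun x : ℝ => x ^ r * f x := by
    filter_upwards [hf, eventually_gt_atTop (1:ℝ)] with x hfx hx
    have hlx : 0 < Real.log x := Real.log_pos hx
    rw [mul_add, mul_div_cancel₀ _ hlx.ne', Real.exp_add, Real.exp_log hfx,
      ← Real.rpow_def_of_pos (by linarith)]
  have h1 : Tendsto (fun x : ℝ => r + Real.log (f x) / Real.log x) atTop (nhds (r + c)) :=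
    tendsto_const_nhds.add hc
  have h2 : Tendsto (fun x : ℝ => Real.log x * (r + Real.log (f x) / Real.log x)) atTop atTop :=
    Real.tendsto_log_atTop.atTop_mul_pos hrc h1
  exact (Real.tendsto_exp_atTop.comp h2).congr' key

theorem stmt10 {Ω : Type*} [MeasurableSpace Ω] (μ : Measure Ω) [IsProbabilityMeasure μ]
    (X : Ω → ℝ) (hX : Measurable X) (ρ : ℝ) (hρ : 0 ≤ ρ) :
    ((∀ r : ℝ, 0 ≤ r → r < ρ →
        Tendsto (fun x : ℝ => x ^ r * (μ {ω | X ω > x}).toReal) atTop (nhds 0)) ∧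
     (∀ r : ℝ, ρ < r →
        Tendsto (fun x : ℝ => x ^ r * (μ {ω | X ω > x}).toReal) atTop atTop)) ↔
    (∃ L : ℝ → ℝ, (∀ x : ℝ, 0 < x → 0 < L x) ∧
        Tendsto (fun x : ℝ => (μ {ω | X ω > x}).toReal / (L x / x ^ ρ)) atTop (nhds 1) ∧
        Tendsto (fun x : ℝ => Real.log (L x) / Real.log x) atTop (nhds 0)) := by
  set p : ℝ → ℝ := fun x => (μ {ω | X ω > x}).toReal with hpdef
  have hp0 : ∀ x, 0 ≤ p x := fun x => ENNReal.toReal_nonneg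
  have hp1 : ∀ x, p x ≤ 1 := fun x => by
    simpa using ENNReal.toReal_mono ENNReal.one_ne_top (prob_le_one (μ := μ))
  constructor
  · rintro ⟨H1, H2⟩
    -- p is eventually positive
    have hppos : ∀ᶠ x in atTop, 0 < p x := by
      filter_upwards [(H2 (ρ + 1) (lt_add_one ρ)).eventually_ge_atTop 1,
        eventually_gt_atTop (0:ℝ)] with x h1 hx
      have hxr : 0 < x ^ (ρ + 1) := Real.rpow_pos_of_pos hx _
      nlinarith [hp0 x]
    -- the crucial limit of log p / log
    have hv : Tendsto (fun x => Real.log (p x) / Real.log x) atTop (nhds (-ρ)) := by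
      rw [Metric.tendsto_nhds]
      intro ε hε
      have lower : ∀ᶠ x in atTop, -ρ - ε / 2 ≤ Real.log (p x) / Real.log x := by
        filter_upwards [(H2 (ρ + ε / 2) (by linarith)).eventually_ge_atTop 1,
          eventually_gt_atTop (1:ℝ), hppos] with x h1 hx hpx
        have hx0 : (0:ℝ) < x := by linarith
        have hlx : 0 < Real.log x := Real.log_pos hx
        have hxr : 0 < x ^ (ρ + ε / 2) := Real.rpow_pos_of_pos hx0 _
        have h2 : Real.log 1 ≤ Real.log (x ^ (ρ + ε / 2) * p x) :=
          Real.log_le_log (by norm_num) h1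
        rw [Real.log_one, Real.log_mul hxr.ne' hpx.ne', Real.log_rpow hx0] at h2
        rw [le_div_iff₀ hlx]
        linarith [h2, (by ring : (-ρ - ε / 2) * Real.log x = -((ρ + ε / 2) * Real.log x))]
      have upper : ∀ᶠ x in atTop, Real.log (p x) / Real.log x + ρ < ε := by
        by_cases hcase : ε / 2 ≤ ρ
        · filter_upwards [(H1 (ρ - ε / 2) (by linarith) (by linarith)).eventually_lt_const
            zero_lt_one, eventually_gt_atTop (1:ℝ), hppos] with x h1 hx hpx
          have hx0 : (0:ℝ) < x := by linarith
          have hlx : 0 < Real.log x := Real.log_pos hx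
          have hxr : 0 < x ^ (ρ - ε / 2) := Real.rpow_pos_of_pos hx0 _
          have h2 : Real.log (x ^ (ρ - ε / 2) * p x) < Real.log 1 :=
            Real.log_lt_log (by positivity) h1
          rw [Real.log_one, Real.log_mul hxr.ne' hpx.ne', Real.log_rpow hx0] at h2
          have h3 : Real.log (p x) / Real.log x < -(ρ - ε / 2) := by
            rw [div_lt_iff₀ hlx]
            linarith [(by ring : -(ρ - ε / 2) * Real.log x = -((ρ - ε / 2) * Real.log x))]
          linarith
        · filter_upwards [eventually_gt_atTop (1:ℝ), hppos] with x hx hpx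
          have hlx : 0 < Real.log x := Real.log_pos hx
          have h2 : Real.log (p x) ≤ 0 := Real.log_nonpos (hp0 x) (hp1 x)
          have h3 : Real.log (p x) / Real.log x ≤ 0 := div_nonpos_of_nonpos_of_nonneg h2 hlx.le
          linarith
      filter_upwards [lower, upper] with x hl hu
      rw [Real.dist_eq, abs_lt]
      constructor <;> [skip; skip] <;> simp only [sub_neg_eq_add] <;> linarith
    -- construct L
    refine ⟨fun x => if 1 ≤ x ∧ 0 < p x then x ^ ρ * p x else 1, ?_, ?_, ?_⟩
    · intro x hx
      by_cases h : 1 ≤ x ∧ 0 < p x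
      · simp only [if_pos h]
        exact mul_pos (Real.rpow_pos_of_pos hx ρ) h.2
      · simp [if_neg h]
    · have hev : (fun _ : ℝ => (1:ℝ)) =ᶠ[atTop]
          fun x => p x / ((if 1 ≤ x ∧ 0 < p x then x ^ ρ * p x else 1) / x ^ ρ) := by
        filter_upwards [eventually_ge_atTop (1:ℝ), hppos] with x hx hpx
        have hx0 : (0:ℝ) < x := by linarith
        have hxρ : (0:ℝ) < x ^ ρ := Real.rpow_pos_of_pos hx0 ρ
        rw [if_pos ⟨hx, hpx⟩]
        rw [eq_comm, div_eq_one_iff_eq (by positivity)]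
        field_simp
      exact tendsto_const_nhds.congr' hev
    · have hev : (fun x : ℝ => ρ + Real.log (p x) / Real.log x) =ᶠ[atTop]
          fun x => Real.log (if 1 ≤ x ∧ 0 < p x then x ^ ρ * p x else 1) / Real.log x := by
        filter_upwards [eventually_gt_atTop (1:ℝ), hppos] with x hx hpx
        have hx0 : (0:ℝ) < x := by linarith
        have hlx : 0 < Real.log x := Real.log_pos hx
        have hxρ : (0:ℝ) < x ^ ρ := Real.rpow_pos_of_pos hx0 ρ
        rw [if_pos ⟨hx.le, hpx⟩, Real.log_mul hxρ.ne' hpx.ne', Real.log_rpow hx0, add_div,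
          mul_div_cancel_right₀ ρ hlx.ne']
      have := (tendsto_const_nhds.add hv).congr' hev
      rwa [add_neg_cancel] at this
  · rintro ⟨L, hLpos, hratio, hlog⟩
    have hLev : ∀ᶠ x in atTop, 0 < L x :=
      (eventually_gt_atTop (0:ℝ)).mono fun x hx => hLpos x hx
    have heq : ∀ r : ℝ, ∀ᶠ x in atTop,
        p x / (L x / x ^ ρ) * (x ^ (r - ρ) * L x) = x ^ r * p x := by
      intro r
      filter_upwards [eventually_gt_atTop (0:ℝ)] with x hx
      have hL := hLpos x hx
      have hxρ : 0 < x ^ ρ := Real.rpow_pos_of_pos hx ρ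
      have hxr : x ^ r = x ^ ρ * x ^ (r - ρ) := by
        rw [← Real.rpow_add hx]; ring_nf
      rw [hxr]; field_simp
    constructor
    · intro r hr0 hrρ
      have hg : Tendsto (fun x : ℝ => x ^ (r - ρ) * L x) atTop (nhds 0) :=
        lemA_zero L hLev 0 hlog (r - ρ) (by linarith)
      have := (hratio.mul hg).congr' (heq r)
      rwa [mul_zero] at this
    · intro r hr
      have hg : Tendsto (fun x : ℝ => x ^ (r - ρ) * L x) atTop atTop :=
        lemA_top L hLev 0 hlog (r - ρ) (by linarith)
      exact (hratio.pos_mul_atTop zero_lt_one hg).congr' (heq r)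
end

section
/- Let {X_n} be i.i.d. random variables such that (log max_{1≤k≤n} X_k)/(log n) →_P 1/ρ for some 0 < ρ < ∞. Then for every x > 0, (ln P((log max_{1≤k≤n} X_k)/(log n) ≥ 1/ρ + x))/(ln n) → −ρx as n → ∞. -/
open MeasureTheory ProbabilityTheory Filter
open scoped ENNReal

set_option linter.unusedVariables false
set_option linter.unusedSectionVars false


lemma exp_neg_le_one_sub_half {s : ℝ} (h0 : 0 ≤ s) (h1 : s ≤ 1) :
    Real.exp (-s) ≤ 1 - s / 2 := by
  have h2 : (2:ℝ) ≤ Real.exp 1 := by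
    have := Real.add_one_le_exp (1:ℝ); linarith
  have hinv : Real.exp (-1) ≤ 1/2 := by
    rw [Real.exp_neg]
    rw [inv_le_comm₀ (Real.exp_pos 1) (by norm_num)]
    simpa using h2
  have hconv := convexOn_exp.2 (Set.mem_univ (0:ℝ)) (Set.mem_univ (-1:ℝ))
    (by linarith : (0:ℝ) ≤ 1 - s) h0 (by ring)
  simp only [smul_eq_mul, mul_zero, mul_neg, mul_one, zero_add, Real.exp_zero] at hconv
  nlinarith [hconv, hinv]

lemma bern_bound {p : ℝ} (h0 : 0 ≤ p) (h1 : p ≤ 1) (n : ℕ) :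
    1 - n * p ≤ (1 - p) ^ n := by
  have := one_add_mul_le_pow (a := -p) (by linarith) n
  have e : (1 : ℝ) + n * (-p) = 1 - n * p := by ring
  rw [e] at this
  rwa [← sub_eq_add_neg] at this

lemma pow_le_exp {p : ℝ} (h0 : 0 ≤ p) (h1 : p ≤ 1) (n : ℕ) :
    (1 - p) ^ n ≤ Real.exp (-(n * p)) := by
  have h : (1 - p) ≤ Real.exp (-p) := by
    have := Real.add_one_le_exp (-p); linarith
  calc (1 - p) ^ n ≤ (Real.exp (-p)) ^ n := pow_le_pow_left₀ (by linarith) h n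
    _ = Real.exp (-(n * p)) := by rw [← Real.exp_nat_mul]; ring_nf


lemma pmax_lt_iff {Ω : Type*} (X : ℕ → Ω → ℝ) {n : ℕ} (hn : n ≠ 0) (a : ℝ) (ω : Ω) :
    pmax X n ω < a ↔ ∀ k < n, X k ω < a := by
  rw [pmax, dif_neg hn, Finset.sup'_lt_iff]
  simp

section
variable {Ω : Type*} [MeasurableSpace Ω] (μ : Measure Ω) [IsProbabilityMeasure μ]
  (X : ℕ → Ω → ℝ)

lemma meas_pmax_lt (hindep : iIndepFun X μ)
    (hident : ∀ n, IdentDistrib (X n) (X 0) μ μ)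
    {n : ℕ} (hn : n ≠ 0) (a : ℝ) :
    μ {ω | pmax X n ω < a} = (μ {ω | X 0 ω < a}) ^ n := by
  have h1 : {ω | pmax X n ω < a} = ⋂ k ∈ Finset.range n, X k ⁻¹' Set.Iio a := by
    ext ω; simp [pmax_lt_iff X hn]
  rw [h1, hindep.meas_biInter (fun i _ => ⟨Set.Iio a, measurableSet_Iio, rfl⟩)]
  have h2 : ∀ k, μ (X k ⁻¹' Set.Iio a) = μ (X 0 ⁻¹' Set.Iio a) := fun k =>
    (hident k).measure_mem_eq measurableSet_Iio
  simp only [h2, Finset.prod_const, Finset.card_range]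
  rfl

lemma meas_X0_lt (hmeas : ∀ n, Measurable (X n)) (a : ℝ) :
    (μ {ω | X 0 ω < a}).toReal = 1 - (μ {ω | a ≤ X 0 ω}).toReal := by
  have hs : MeasurableSet {ω | a ≤ X 0 ω} := (hmeas 0) measurableSet_Ici
  have h1 : {ω | X 0 ω < a} = {ω | a ≤ X 0 ω}ᶜ := by ext ω; simp [not_le]
  rw [h1, prob_compl_eq_one_sub hs, ENNReal.toReal_sub_of_le prob_le_one ENNReal.one_ne_top]
  simp

lemma meas_pmax_lt_toReal (hmeas : ∀ n, Measurable (X n))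
    (hindep : iIndepFun X μ)
    (hident : ∀ n, IdentDistrib (X n) (X 0) μ μ)
    {n : ℕ} (hn : n ≠ 0) (a : ℝ) :
    (μ {ω | pmax X n ω < a}).toReal = (1 - (μ {ω | a ≤ X 0 ω}).toReal) ^ n := by
  rw [meas_pmax_lt μ X hindep hident hn a, ENNReal.toReal_pow, meas_X0_lt μ X hmeas a]

lemma meas_le_pmax (hmeas : ∀ n, Measurable (X n))
    (hindep : iIndepFun X μ)
    (hident : ∀ n, IdentDistrib (X n) (X 0) μ μ)
    {n : ℕ} (hn : n ≠ 0) (a : ℝ) :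
    (μ {ω | a ≤ pmax X n ω}).toReal
      = 1 - (1 - (μ {ω | a ≤ X 0 ω}).toReal) ^ n := by
  have hms : MeasurableSet {ω | pmax X n ω < a} := by
    have h1 : {ω | pmax X n ω < a} = ⋂ k ∈ Finset.range n, X k ⁻¹' Set.Iio a := by
      ext ω; simp [pmax_lt_iff X hn]
    rw [h1]
    exact Set.Finite.measurableSet_biInter (Finset.finite_toSet _)
      (fun k _ => (hmeas k) measurableSet_Iio)
  have h1 : {ω | a ≤ pmax X n ω} = {ω | pmax X n ω < a}ᶜ := by ext ω; simp [not_lt]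
  rw [h1, prob_compl_eq_one_sub hms,
    ENNReal.toReal_sub_of_le prob_le_one ENNReal.one_ne_top,
    meas_pmax_lt_toReal μ X hmeas hindep hident hn a]
  simp
end


lemma exp_one_lt_three : Real.exp 1 < 3 := by
  have := Real.exp_one_lt_d9; linarith

lemma Log_nat {n : ℕ} (hn : 3 ≤ n) : Log n = Real.log n := by
  rw [Log, max_eq_right]
  have : (3:ℝ) ≤ n := by exact_mod_cast hn
  linarith [exp_one_lt_three]

lemma log_nat_pos {n : ℕ} (hn : 3 ≤ n) : 0 < Real.log n := by
  apply Real.log_pos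
  have : (3:ℝ) ≤ n := by exact_mod_cast hn
  linarith

lemma le_Log_div_iff {y c : ℝ} {n : ℕ} (hn : 3 ≤ n) (hc : 1 < c * Real.log n) :
    c ≤ Log y / Log n ↔ (n:ℝ) ^ c ≤ y := by
  have hln := log_nat_pos hn
  have hnpos : (0:ℝ) < n := by positivity
  have hmaxpos : 0 < max (Real.exp 1) y := lt_of_lt_of_le (Real.exp_pos 1) (le_max_left _ _)
  have hrw : (n:ℝ) ^ c = Real.exp (c * Real.log n) := by
    rw [Real.rpow_def_of_pos hnpos, mul_comm]
  have h1 : c ≤ Log y / Log n ↔ c * Real.log n ≤ Log y := by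
    rw [Log_nat hn, le_div_iff₀ hln]
  rw [h1, Log, Real.le_log_iff_exp_le hmaxpos, ← hrw]
  constructor
  · intro h
    rcases le_max_iff.mp h with h' | h'
    · exfalso
      have : Real.exp 1 < (n:ℝ) ^ c := by
        rw [hrw]; exact Real.exp_lt_exp.mpr hc
      linarith
    · exact h'
  · intro h; exact le_max_iff.mpr (Or.inr h)

lemma exp_neg_one_le_half : Real.exp (-1) ≤ 1/2 := by
  have h2 : (2:ℝ) ≤ Real.exp 1 := by
    have := Real.add_one_le_exp (1:ℝ); linarith
  rw [Real.exp_neg, inv_le_comm₀ (Real.exp_pos 1) (by norm_num)]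
  linarith

section
variable {Ω : Type*} [MeasurableSpace Ω] (μ : Measure Ω) [IsProbabilityMeasure μ]
  (X : ℕ → Ω → ℝ)

lemma toReal_prob_le_one (s : Set Ω) : (μ s).toReal ≤ 1 := by
  have := ENNReal.toReal_mono ENNReal.one_ne_top (prob_le_one (μ := μ) (s := s))
  simpa using this

lemma hconv_toReal (ρ : ℝ)
    (hconv : ∀ ε : ℝ, 0 < ε →
        Tendsto (fun n : ℕ => μ {ω | ε ≤ |Log (pmax X n ω) / Log n - 1 / ρ|}) atTop (nhds 0))
    {ε : ℝ} (hε : 0 < ε) :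
    Tendsto (fun n : ℕ =>
      (μ {ω | ε ≤ |Log (pmax X n ω) / Log n - 1 / ρ|}).toReal) atTop (nhds 0) := by
  have := (ENNReal.tendsto_toReal (a := 0) (by simp)).comp (hconv ε hε)
  simpa [Function.comp_def] using this

lemma ev_log_big {c : ℝ} (hc : 0 < c) : ∀ᶠ n : ℕ in atTop, 1 < c * Real.log n := by
  have h : Tendsto (fun n : ℕ => c * Real.log n) atTop atTop := by
    apply Tendsto.const_mul_atTop hc
    exact Real.tendsto_log_atTop.comp tendsto_natCast_atTop_atTop
  exact h.eventually_gt_atTop 1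

lemma lemA (hmeas : ∀ n, Measurable (X n))
    (hindep : iIndepFun X μ)
    (hident : ∀ n, IdentDistrib (X n) (X 0) μ μ)
    (ρ : ℝ) (hρ : 0 < ρ)
    (hconv : ∀ ε : ℝ, 0 < ε →
        Tendsto (fun n : ℕ => μ {ω | ε ≤ |Log (pmax X n ω) / Log n - 1 / ρ|}) atTop (nhds 0))
    {ε : ℝ} (hε : 0 < ε) :
    ∀ᶠ n : ℕ in atTop, (μ {ω | (n:ℝ) ^ (1/ρ + ε) ≤ X 0 ω}).toReal ≤ 1 / n := by
  set c' := 1/ρ + ε with hc'def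
  have hc' : 0 < c' := by positivity
  have h8 := (hconv_toReal μ X ρ hconv hε).eventually_lt_const (show (0:ℝ) < 1/8 by norm_num)
  filter_upwards [h8, eventually_ge_atTop 3, ev_log_big hc'] with n h8n h3n hcn
  have hn0 : n ≠ 0 := by omega
  set p := (μ {ω | (n:ℝ) ^ c' ≤ X 0 ω}).toReal with hpdef
  have hp0 : 0 ≤ p := ENNReal.toReal_nonneg
  have hp1 : p ≤ 1 := toReal_prob_le_one μ _
  have hEeq : {ω | (n:ℝ) ^ c' ≤ pmax X n ω}
      = {ω | c' ≤ Log (pmax X n ω) / Log n} := by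
    ext ω; rw [Set.mem_setOf_eq, Set.mem_setOf_eq, le_Log_div_iff h3n hcn]
  have hsub : {ω | c' ≤ Log (pmax X n ω) / Log n}
      ⊆ {ω | ε ≤ |Log (pmax X n ω) / Log n - 1 / ρ|} := by
    intro ω hω
    simp only [Set.mem_setOf_eq] at hω ⊢
    have hω' : 1/ρ + ε ≤ Log (pmax X n ω) / Log n := hω
    exact le_abs.mpr (Or.inl (by linarith))
  have hPle : (μ {ω | (n:ℝ) ^ c' ≤ pmax X n ω}).toReal
      < 1/8 := by
    refine lt_of_le_of_lt ?_ h8n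
    exact ENNReal.toReal_mono (measure_ne_top _ _) (measure_mono (hEeq ▸ hsub))
  rw [meas_le_pmax μ X hmeas hindep hident hn0, ← hpdef] at hPle
  by_contra hcon
  push_neg at hcon
  have hnpos : (0:ℝ) < n := by positivity
  have h1np : 1 ≤ (n:ℝ) * p := by
    rw [div_lt_iff₀ hnpos] at hcon
    linarith [hcon]
  have hb := pow_le_exp hp0 hp1 n
  have hb2 : Real.exp (-((n:ℝ) * p)) ≤ Real.exp (-1) :=
    Real.exp_le_exp.mpr (by linarith)
  have := exp_neg_one_le_half
  nlinarith

lemma lemB (hmeas : ∀ n, Measurable (X n))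
    (hindep : iIndepFun X μ)
    (hident : ∀ n, IdentDistrib (X n) (X 0) μ μ)
    (ρ : ℝ) (hρ : 0 < ρ)
    (hconv : ∀ ε : ℝ, 0 < ε →
        Tendsto (fun n : ℕ => μ {ω | ε ≤ |Log (pmax X n ω) / Log n - 1 / ρ|}) atTop (nhds 0))
    {ε : ℝ} (hε : 0 < ε) (hε' : ε < 1/ρ) :
    ∀ᶠ n : ℕ in atTop, 1 / (2 * n) ≤ (μ {ω | (n:ℝ) ^ (1/ρ - ε) ≤ X 0 ω}).toReal := by
  set c'' := 1/ρ - ε with hcdef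
  have hc'' : 0 < c'' := by rw [hcdef]; linarith
  have h8 := (hconv_toReal μ X ρ hconv hε).eventually_lt_const (show (0:ℝ) < 1/8 by norm_num)
  filter_upwards [h8, eventually_ge_atTop 3, ev_log_big hc''] with n h8n h3n hcn
  have hn0 : n ≠ 0 := by omega
  set p := (μ {ω | (n:ℝ) ^ c'' ≤ X 0 ω}).toReal with hpdef
  have hp0 : 0 ≤ p := ENNReal.toReal_nonneg
  have hp1 : p ≤ 1 := toReal_prob_le_one μ _
  have hEeq : {ω | pmax X n ω < (n:ℝ) ^ c''}
      = {ω | c'' ≤ Log (pmax X n ω) / Log n}ᶜ := by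
    ext ω
    simp only [Set.mem_setOf_eq, Set.mem_compl_iff, not_le]
    exact lt_iff_lt_of_le_iff_le (le_Log_div_iff h3n hcn).symm
  have hsub : {ω | c'' ≤ Log (pmax X n ω) / Log n}ᶜ
      ⊆ {ω | ε ≤ |Log (pmax X n ω) / Log n - 1 / ρ|} := by
    intro ω hω
    simp only [Set.mem_compl_iff, Set.mem_setOf_eq, not_le] at hω ⊢
    have hω' : Log (pmax X n ω) / Log n < 1/ρ - ε := hω
    exact le_abs.mpr (Or.inr (by linarith))
  have hPle : (μ {ω | pmax X n ω < (n:ℝ) ^ c''}).toReal < 1/8 := by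
    refine lt_of_le_of_lt ?_ h8n
    exact ENNReal.toReal_mono (measure_ne_top _ _) (measure_mono (hEeq ▸ hsub))
  rw [meas_pmax_lt_toReal μ X hmeas hindep hident hn0, ← hpdef] at hPle
  have hb := bern_bound hp0 hp1 n
  have hnpos : (0:ℝ) < n := by positivity
  rw [div_le_iff₀ (by positivity)]
  nlinarith
end

section
variable {Ω : Type*} [MeasurableSpace Ω] (μ : Measure Ω) [IsProbabilityMeasure μ]
  (X : ℕ → Ω → ℝ)

lemma g_anti {a b : ℝ} (hab : a ≤ b) :
    (μ {ω | b ≤ X 0 ω}).toReal ≤ (μ {ω | a ≤ X 0 ω}).toReal :=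
  ENNReal.toReal_mono (measure_ne_top _ _)
    (measure_mono (fun ω hω => le_trans hab hω))

lemma transfer_upper (hmeas : ∀ n, Measurable (X n))
    (hindep : iIndepFun X μ)
    (hident : ∀ n, IdentDistrib (X n) (X 0) μ μ)
    (ρ : ℝ) (hρ : 0 < ρ)
    (hconv : ∀ ε : ℝ, 0 < ε →
        Tendsto (fun n : ℕ => μ {ω | ε ≤ |Log (pmax X n ω) / Log n - 1 / ρ|}) atTop (nhds 0))
    {ε : ℝ} (hε : 0 < ε) {c : ℝ} (hc : 0 < c) :
    ∀ᶠ n : ℕ in atTop,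
      (μ {ω | (n:ℝ) ^ c ≤ X 0 ω}).toReal ≤ 2 / (n:ℝ) ^ (c / (1/ρ + ε)) := by
  set c' := 1/ρ + ε with hc'def
  have hc' : 0 < c' := by positivity
  set β := c / c' with hβdef
  have hβ : 0 < β := by positivity
  obtain ⟨N, hN⟩ := eventually_atTop.mp (lemA μ X hmeas hindep hident ρ hρ hconv hε)
  have hrtend : Tendsto (fun n : ℕ => ((n:ℝ)) ^ β) atTop atTop :=
    (tendsto_rpow_atTop hβ).comp tendsto_natCast_atTop_atTop
  have hmtend : Tendsto (fun n : ℕ => ⌊((n:ℝ)) ^ β⌋₊) atTop atTop :=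
    tendsto_nat_floor_atTop.comp hrtend
  filter_upwards [hmtend.eventually_ge_atTop N, hrtend.eventually_ge_atTop 2,
    eventually_ge_atTop 1] with n hmN h2r h1n
  set r := ((n:ℝ)) ^ β with hrdef
  set m := ⌊r⌋₊ with hmdef
  have hr0 : 0 ≤ r := by positivity
  have hmler : (m:ℝ) ≤ r := Nat.floor_le hr0
  have hrm : r - 1 < (m:ℝ) := Nat.sub_one_lt_floor r
  have hm2 : r / 2 ≤ (m:ℝ) := by linarith
  have hmpos : (0:ℝ) < m := by linarith
  have hnn : (0:ℝ) ≤ (n:ℝ) := Nat.cast_nonneg n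
  have hkey : ((m:ℝ)) ^ c' ≤ (n:ℝ) ^ c := by
    have h1 : ((m:ℝ)) ^ c' ≤ r ^ c' :=
      Real.rpow_le_rpow (le_of_lt hmpos) hmler (le_of_lt hc')
    have h2 : r ^ c' = (n:ℝ) ^ c := by
      rw [hrdef, ← Real.rpow_mul hnn]
      congr 1
      rw [hβdef]
      field_simp
    linarith [h1, h2.le]
  calc (μ {ω | (n:ℝ) ^ c ≤ X 0 ω}).toReal
      ≤ (μ {ω | ((m:ℝ)) ^ c' ≤ X 0 ω}).toReal := g_anti μ X hkey
    _ ≤ 1 / m := hN m hmN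
    _ ≤ 2 / r := by
        rw [div_le_div_iff₀ hmpos (by linarith)]
        linarith

lemma transfer_lower (hmeas : ∀ n, Measurable (X n))
    (hindep : iIndepFun X μ)
    (hident : ∀ n, IdentDistrib (X n) (X 0) μ μ)
    (ρ : ℝ) (hρ : 0 < ρ)
    (hconv : ∀ ε : ℝ, 0 < ε →
        Tendsto (fun n : ℕ => μ {ω | ε ≤ |Log (pmax X n ω) / Log n - 1 / ρ|}) atTop (nhds 0))
    {ε : ℝ} (hε : 0 < ε) (hε' : ε < 1/ρ) {c : ℝ} (hc : 0 < c) :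
    ∀ᶠ n : ℕ in atTop,
      1 / (4 * (n:ℝ) ^ (c / (1/ρ - ε))) ≤ (μ {ω | (n:ℝ) ^ c ≤ X 0 ω}).toReal := by
  set c'' := 1/ρ - ε with hcdef
  have hc'' : 0 < c'' := by rw [hcdef]; linarith
  set γ := c / c'' with hγdef
  have hγ : 0 < γ := by positivity
  obtain ⟨N, hN⟩ := eventually_atTop.mp (lemB μ X hmeas hindep hident ρ hρ hconv hε hε')
  have hrtend : Tendsto (fun n : ℕ => ((n:ℝ)) ^ γ) atTop atTop :=
    (tendsto_rpow_atTop hγ).comp tendsto_natCast_atTop_atTop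
  have hmtend : Tendsto (fun n : ℕ => ⌈((n:ℝ)) ^ γ⌉₊) atTop atTop :=
    tendsto_nat_ceil_atTop.comp hrtend
  filter_upwards [hmtend.eventually_ge_atTop N, hrtend.eventually_ge_atTop 1,
    eventually_ge_atTop 1] with n hmN h1r h1n
  set r := ((n:ℝ)) ^ γ with hrdef
  set m := ⌈r⌉₊ with hmdef
  have hr0 : 0 ≤ r := by positivity
  have hrlem : r ≤ (m:ℝ) := Nat.le_ceil r
  have hmub : (m:ℝ) < r + 1 := Nat.ceil_lt_add_one hr0
  have hm2r : (m:ℝ) ≤ 2 * r := by linarith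
  have hmpos : (0:ℝ) < m := by linarith
  have hnn : (0:ℝ) ≤ (n:ℝ) := Nat.cast_nonneg n
  have hkey : (n:ℝ) ^ c ≤ ((m:ℝ)) ^ c'' := by
    have h2 : (n:ℝ) ^ c = r ^ c'' := by
      rw [hrdef, ← Real.rpow_mul hnn]
      congr 1
      rw [hγdef]
      field_simp
    have h1 : r ^ c'' ≤ ((m:ℝ)) ^ c'' := Real.rpow_le_rpow hr0 hrlem (le_of_lt hc'')
    linarith [h2.le, h1]
  calc 1 / (4 * r) ≤ 1 / (2 * m) := by
        rw [div_le_div_iff₀ (by linarith) (by linarith)]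
        linarith
    _ ≤ (μ {ω | ((m:ℝ)) ^ c'' ≤ X 0 ω}).toReal := hN m hmN
    _ ≤ (μ {ω | (n:ℝ) ^ c ≤ X 0 ω}).toReal := g_anti μ X hkey

lemma lemC (hmeas : ∀ n, Measurable (X n))
    (hindep : iIndepFun X μ)
    (hident : ∀ n, IdentDistrib (X n) (X 0) μ μ)
    (ρ : ℝ) (hρ : 0 < ρ)
    (hconv : ∀ ε : ℝ, 0 < ε →
        Tendsto (fun n : ℕ => μ {ω | ε ≤ |Log (pmax X n ω) / Log n - 1 / ρ|}) atTop (nhds 0))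
    {c : ℝ} (hc : 0 < c) :
    Tendsto (fun n : ℕ => Real.log ((μ {ω | (n:ℝ) ^ c ≤ X 0 ω}).toReal) / Real.log n)
      atTop (nhds (-(ρ * c))) := by
  rw [Metric.tendsto_nhds]
  intro δ hδ
  set ε := min (δ / (8 * c * ρ^2)) (1 / (2*ρ)) with hεdef
  have hεpos : 0 < ε := lt_min (by positivity) (by positivity)
  have hε1 : ε ≤ δ / (8*c*ρ^2) := min_le_left _ _
  have hε2 : ε ≤ 1/(2*ρ) := min_le_right _ _
  have hu : ρ * ε ≤ 1/2 := by
    calc ρ * ε ≤ ρ * (1/(2*ρ)) := mul_le_mul_of_nonneg_left hε2 hρ.le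
      _ = 1/2 := by field_simp
  have hε' : ε < 1/ρ := by
    have : (1:ℝ)/(2*ρ) < 1/ρ := by
      rw [div_lt_div_iff₀ (by positivity) hρ]; nlinarith
    linarith
  have h8 : ε * (8*c*ρ^2) ≤ δ := by
    rw [← le_div_iff₀ (by positivity)]; exact hε1
  have hc'pos : 0 < 1/ρ + ε := by positivity
  have hc''pos : 0 < 1/ρ - ε := by linarith
  set β := c / (1/ρ + ε) with hβdef
  set γ := c / (1/ρ - ε) with hγdef
  have hβpos : 0 < β := by positivity
  have hγpos : 0 < γ := by positivity
  have hβid : β * (1 + ρ*ε) = ρ * c := by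
    rw [hβdef, div_mul_eq_mul_div, div_eq_iff (ne_of_gt hc'pos)]
    field_simp
  have hγid : γ * (1 - ρ*ε) = ρ * c := by
    rw [hγdef, div_mul_eq_mul_div, div_eq_iff (ne_of_gt hc''pos)]
    field_simp
  have hβle : β ≤ ρ * c := by nlinarith [mul_pos hρ hεpos]
  have hγle : γ ≤ 2 * (ρ * c) := by nlinarith [mul_pos hρ hεpos]
  have key1 : ρ * c - β ≤ δ/8 := by nlinarith [mul_pos hρ hεpos]
  have key2 : γ - ρ * c ≤ δ/4 := by nlinarith [mul_pos hρ hεpos]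
  have hlogtend : Tendsto (fun n : ℕ => Real.log n) atTop atTop :=
    Real.tendsto_log_atTop.comp tendsto_natCast_atTop_atTop
  have hlog4 : ∀ᶠ n : ℕ in atTop, Real.log 4 / Real.log n < δ/4 :=
    (tendsto_const_nhds.div_atTop hlogtend).eventually_lt_const (by positivity)
  filter_upwards [transfer_upper μ X hmeas hindep hident ρ hρ hconv hεpos hc,
    transfer_lower μ X hmeas hindep hident ρ hρ hconv hεpos hε' hc,
    eventually_ge_atTop 3, hlog4] with n hup hlow h3n h4n
  have hnpos : (0:ℝ) < n := by
    have : (3:ℝ) ≤ n := by exact_mod_cast h3n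
    linarith
  have hln : 0 < Real.log n := log_nat_pos h3n
  have hrβpos : 0 < (n:ℝ) ^ β := Real.rpow_pos_of_pos hnpos β
  have hrγpos : 0 < (n:ℝ) ^ γ := Real.rpow_pos_of_pos hnpos γ
  set P := (μ {ω | (n:ℝ) ^ c ≤ X 0 ω}).toReal with hPdef
  have hPpos : 0 < P := lt_of_lt_of_le (by positivity) hlow
  have hlogup : Real.log P ≤ Real.log 2 - β * Real.log n := by
    have h := Real.log_le_log hPpos hup
    rwa [Real.log_div (by norm_num) (ne_of_gt hrβpos), Real.log_rpow hnpos] at h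
  have hloglow : -(Real.log 4 + γ * Real.log n) ≤ Real.log P := by
    have h0 : (0:ℝ) < 1 / (4 * (n:ℝ) ^ γ) := by positivity
    have h := Real.log_le_log h0 hlow
    rwa [one_div, Real.log_inv, Real.log_mul (by norm_num) (ne_of_gt hrγpos),
      Real.log_rpow hnpos] at h
  have fup : Real.log P / Real.log n ≤ Real.log 2 / Real.log n - β := by
    have h := (div_le_div_iff_of_pos_right hln).mpr hlogup
    rwa [sub_div, mul_div_cancel_right₀ _ (ne_of_gt hln)] at h
  have flow : -(Real.log 4 / Real.log n) - γ ≤ Real.log P / Real.log n := by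
    have h := (div_le_div_iff_of_pos_right hln).mpr hloglow
    rwa [neg_div, add_div, mul_div_cancel_right₀ _ (ne_of_gt hln), neg_add] at h
  have h2le4 : Real.log 2 / Real.log n ≤ Real.log 4 / Real.log n := by
    exact (div_le_div_iff_of_pos_right hln).mpr (Real.log_le_log (by norm_num) (by norm_num))
  have h4nn : 0 ≤ Real.log 4 / Real.log n := by positivity
  rw [Real.dist_eq, abs_lt]
  constructor
  · linarith
  · linarith
end

theorem stmt11 {Ω : Type*} [MeasurableSpace Ω] (μ : Measure Ω) [IsProbabilityMeasure μ]
    (X : ℕ → Ω → ℝ) (hmeas : ∀ n, Measurable (X n))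
    (hindep : iIndepFun X μ)
    (hident : ∀ n, IdentDistrib (X n) (X 0) μ μ)
    (ρ : ℝ) (hρ : 0 < ρ)
    (hconv : ∀ ε : ℝ, 0 < ε →
        Tendsto (fun n : ℕ => μ {ω | ε ≤ |Log (pmax X n ω) / Log n - 1 / ρ|}) atTop (nhds 0)) :
    ∀ x : ℝ, 0 < x →
      Tendsto (fun n : ℕ =>
          Real.log ((μ {ω | 1 / ρ + x ≤ Log (pmax X n ω) / Log n}).toReal) / Real.log n)
        atTop (nhds (-(ρ * x))) := by
  intro x hx
  set c := 1 / ρ + x with hcdef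
  have hc : 0 < c := by positivity
  have hρc : ρ * c = 1 + ρ * x := by
    rw [hcdef]; field_simp
  set p : ℕ → ℝ := fun n => (μ {ω | (n:ℝ) ^ c ≤ X 0 ω}).toReal with hpdef
  have hgtend : Tendsto (fun n : ℕ => Real.log (p n) / Real.log n) atTop (nhds (-(ρ * c))) :=
    lemC μ X hmeas hindep hident ρ hρ hconv hc
  have hlogtend : Tendsto (fun n : ℕ => Real.log n) atTop atTop :=
    Real.tendsto_log_atTop.comp tendsto_natCast_atTop_atTop
  -- eventual positivity of p n
  have hpos : ∀ᶠ n : ℕ in atTop, 0 < p n := by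
    have hε0 : (0:ℝ) < 1/(2*ρ) := by positivity
    have hε0' : 1/(2*ρ) < 1/ρ := by
      rw [div_lt_div_iff₀ (by positivity) hρ]; nlinarith
    filter_upwards [transfer_lower μ X hmeas hindep hident ρ hρ hconv hε0 hε0' hc,
      eventually_ge_atTop 1] with n hlow h1n
    have hnpos : (0:ℝ) < n := by
      have : (1:ℝ) ≤ n := by exact_mod_cast h1n
      linarith
    exact lt_of_lt_of_le (by positivity) hlow
  -- eventually n * p n ≤ 1
  have hsmall : ∀ᶠ n : ℕ in atTop, (n:ℝ) * p n ≤ 1 := by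
    have hlim : -(ρ * c) < -(1 + ρ * x / 2) := by rw [hρc]; nlinarith
    have hlt := hgtend.eventually_lt_const hlim
    filter_upwards [hlt, hpos, eventually_ge_atTop 3] with n hltn hposn h3n
    have hln : 0 < Real.log n := log_nat_pos h3n
    have hnpos : (0:ℝ) < n := by
      have : (3:ℝ) ≤ n := by exact_mod_cast h3n
      linarith
    have h1 : Real.log (p n) < -(1 + ρ * x / 2) * Real.log n :=
      (div_lt_iff₀ hln).mp hltn
    have h2 : p n < (n:ℝ) ^ (-(1 + ρ * x / 2)) := by
      rw [Real.rpow_def_of_pos hnpos, mul_comm]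
      calc p n = Real.exp (Real.log (p n)) := (Real.exp_log hposn).symm
        _ < Real.exp (-(1 + ρ * x / 2) * Real.log n) := Real.exp_lt_exp.mpr h1
    have h3 : (n:ℝ) * p n ≤ (n:ℝ) ^ (1 + -(1 + ρ * x / 2)) := by
      rw [Real.rpow_add hnpos, Real.rpow_one]
      exact mul_le_mul_of_nonneg_left h2.le hnpos.le
    refine h3.trans (Real.rpow_le_one_of_one_le_of_nonpos ?_ ?_)
    · have : (3:ℝ) ≤ n := by exact_mod_cast h3n
      linarith
    · nlinarith
  -- limits of bounding sequences
  have hUtend : Tendsto (fun n : ℕ => 1 + Real.log (p n) / Real.log n) atTop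
      (nhds (-(ρ * x))) := by
    have h := (tendsto_const_nhds (x := (1:ℝ))).add hgtend
    rwa [show 1 + -(ρ * c) = -(ρ * x) by rw [hρc]; ring] at h
  have hLtend : Tendsto
      (fun n : ℕ => (1 + Real.log (p n) / Real.log n) - Real.log 2 / Real.log n) atTop
      (nhds (-(ρ * x))) := by
    have h2 : Tendsto (fun n : ℕ => Real.log 2 / Real.log n) atTop (nhds 0) :=
      tendsto_const_nhds.div_atTop hlogtend
    simpa using hUtend.sub h2
  -- eventual inequalities and squeeze
  refine tendsto_of_tendsto_of_tendsto_of_le_of_le' hLtend hUtend ?_ ?_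
  · filter_upwards [hpos, hsmall, eventually_ge_atTop 3, ev_log_big hc]
      with n hp hs h3n hcln
    have hn0 : n ≠ 0 := by omega
    have hln : 0 < Real.log n := log_nat_pos h3n
    have hnpos : (0:ℝ) < n := by
      have : (3:ℝ) ≤ n := by exact_mod_cast h3n
      linarith
    have hp0 : 0 ≤ p n := hp.le
    have hp1 : p n ≤ 1 := toReal_prob_le_one μ _
    have hev : {ω | 1 / ρ + x ≤ Log (pmax X n ω) / Log n}
        = {ω | (n:ℝ) ^ c ≤ pmax X n ω} := by
      ext ω; simp only [Set.mem_setOf_eq]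
      exact le_Log_div_iff h3n hcln
    have hFeq : (μ {ω | 1 / ρ + x ≤ Log (pmax X n ω) / Log n}).toReal
        = 1 - (1 - p n) ^ n := by
      rw [hev]; exact meas_le_pmax μ X hmeas hindep hident hn0 _
    have hPub : 1 - (1 - p n) ^ n ≤ (n:ℝ) * p n := by
      have := bern_bound hp0 hp1 n; linarith
    have hPlb : (n:ℝ) * p n / 2 ≤ 1 - (1 - p n) ^ n := by
      have h1 := pow_le_exp hp0 hp1 n
      have h2 := exp_neg_le_one_sub_half (s := (n:ℝ) * p n) (by positivity) hs
      linarith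
    have htpos : 0 < (n:ℝ) * p n := by positivity
    have hPpos : 0 < 1 - (1 - p n) ^ n := lt_of_lt_of_le (by linarith) hPlb
    have hlog : Real.log ((n:ℝ) * p n) - Real.log 2 ≤ Real.log (1 - (1 - p n) ^ n) := by
      have h := Real.log_le_log (by positivity) hPlb
      rwa [Real.log_div (ne_of_gt htpos) (by norm_num)] at h
    rw [hFeq]
    have h := (div_le_div_iff_of_pos_right hln).mpr hlog
    rw [sub_div, Real.log_mul (ne_of_gt hnpos) (ne_of_gt hp), add_div,
      div_self (ne_of_gt hln)] at h
    linarith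
  · filter_upwards [hpos, hsmall, eventually_ge_atTop 3, ev_log_big hc]
      with n hp hs h3n hcln
    have hn0 : n ≠ 0 := by omega
    have hln : 0 < Real.log n := log_nat_pos h3n
    have hnpos : (0:ℝ) < n := by
      have : (3:ℝ) ≤ n := by exact_mod_cast h3n
      linarith
    have hp0 : 0 ≤ p n := hp.le
    have hp1 : p n ≤ 1 := toReal_prob_le_one μ _
    have hev : {ω | 1 / ρ + x ≤ Log (pmax X n ω) / Log n}
        = {ω | (n:ℝ) ^ c ≤ pmax X n ω} := by
      ext ω; simp only [Set.mem_setOf_eq]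
      exact le_Log_div_iff h3n hcln
    have hFeq : (μ {ω | 1 / ρ + x ≤ Log (pmax X n ω) / Log n}).toReal
        = 1 - (1 - p n) ^ n := by
      rw [hev]; exact meas_le_pmax μ X hmeas hindep hident hn0 _
    have hPub : 1 - (1 - p n) ^ n ≤ (n:ℝ) * p n := by
      have := bern_bound hp0 hp1 n; linarith
    have hPlb : (n:ℝ) * p n / 2 ≤ 1 - (1 - p n) ^ n := by
      have h1 := pow_le_exp hp0 hp1 n
      have h2 := exp_neg_le_one_sub_half (s := (n:ℝ) * p n) (by positivity) hs
      linarith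
    have htpos : 0 < (n:ℝ) * p n := by positivity
    have hPpos : 0 < 1 - (1 - p n) ^ n := lt_of_lt_of_le (by linarith) hPlb
    have hlog : Real.log (1 - (1 - p n) ^ n) ≤ Real.log ((n:ℝ) * p n) :=
      Real.log_le_log hPpos hPub
    rw [hFeq]
    have h := (div_le_div_iff_of_pos_right hln).mpr hlog
    rw [Real.log_mul (ne_of_gt hnpos) (ne_of_gt hp), add_div,
      div_self (ne_of_gt hln)] at h
    linarith
end
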